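/- Completeness of (C, d̃): every Cauchy sequence of ordered coalescing pairs [(f₁^{(n)},t₁^{(n)}),(f₂^{(n)},t₂^{(n)})] in (C, d̃) converges in (C, d̃) to an ordered coalescing pair [(f₁,t₁),(f₂,t₂)] ∈ C; in particular the limit paths satisfy f₁(t) ≠ f₂(t) for t ∈ (t⁺, t^c) and f₁ = f₂ on [t^c,∞) when t^c < ∞. -/

import Mathlib

open Set Filter Topology

/-- A path of Π′: a continuous real path starting at time `t0 ∈ [0,1]` from a point of `[-1,1]`,
represented by its extension to `[0,∞)` (constant equal to `f t0` before `t0`). -/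
structure PathP where
  t0 : ℝ
  f : ℝ → ℝ
  ht0 : t0 ∈ Set.Icc (0:ℝ) 1
  hf : Continuous f
  hconst : ∀ t ≤ t0, f t = f t0
  hstart : f t0 ∈ Set.Icc (-1:ℝ) 1

/-- `sup_{t ∈ [0,n+1]} |f̂(t) - ĝ(t)|`. -/
noncomputable def supAbs (γ η : PathP) (n : ℕ) : ℝ :=
  ⨆ t : Set.Icc (0:ℝ) ((n:ℝ)+1), |γ.f t - η.f t|

/-- The sup-type metric d′ on Π′. -/
noncomputable def dprime (γ η : PathP) : ℝ :=
  max |γ.t0 - η.t0| (∑' n : ℕ, (2:ℝ)⁻¹ ^ (n+1) * min (supAbs γ η n) 1)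

/-- The set `{t > t⁺ : f₁(t) = f₂(t)}` whose infimum is the coalescence time. -/
def coalSet (γ η : PathP) : Set ℝ :=
  {t : ℝ | max γ.t0 η.t0 < t ∧ γ.f t = η.f t}

/-- The pair coalesces: either `t^c = ∞` or the two paths agree from `t^c` on. -/
def Coalesces (γ η : PathP) : Prop :=
  coalSet γ η = ∅ ∨ ∀ t, sInf (coalSet γ η) ≤ t → γ.f t = η.f t

/-- An ordered coalescing pair of paths: an element of the space 𝒞. -/
structure CoalPair where
  p1 : PathP
  p2 : PathP
  ordered : ∀ t, max p1.t0 p2.t0 ≤ t → p1.f t ≤ p2.f t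
  coal : Coalesces p1 p2

/-- The beginning `t⁺` of the pod. -/
noncomputable def tPlus (F : CoalPair) : ℝ := max F.p1.t0 F.p2.t0

/-- The coalescence time (meaningful when `tcFinite F`). -/
noncomputable def tcReal (F : CoalPair) : ℝ := sInf (coalSet F.p1 F.p2)

/-- The coalescence time is finite. -/
def tcFinite (F : CoalPair) : Prop := (coalSet F.p1 F.p2).Nonempty

/-- Inverse of `tanh`. -/
noncomputable def artanh (x : ℝ) : ℝ := Real.log ((1 + x) / (1 - x)) / 2

/-- The pod function in the `tanh` time variable. -/
noncomputable def podT (F : CoalPair) (x : ℝ) : ℝ :=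
  F.p2.f (artanh x) - F.p1.f (artanh x)

noncomputable def ttPlus (F : CoalPair) : ℝ := Real.tanh (tPlus F)

open Classical in
/-- `Ψ(t^c)`, with the convention `Ψ(∞) = 1`. -/
noncomputable def ttc (F : CoalPair) : ℝ :=
  if tcFinite F then Real.tanh (tcReal F) else 1

noncomputable def ttm (F : CoalPair) : ℝ := (ttPlus F + ttc F) / 2

/-- The standard pod of a coalescing pair. -/
noncomputable def stdPod (F : CoalPair) : ℝ → ℝ := fun x =>
  let a := ttPlus F
  let c := ttc F
  let m := ttm F
  let mid := podT F m + (1 - (c - m)) / 2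
  if x ≤ m - a then podT F (x + a)
  else if x ≤ 1/2 then
    podT F m + (x - (m - a)) * (mid - podT F m) / (1/2 - (m - a))
  else if x ≤ 1 - (c - m) then
    mid + (x - 1/2) * (podT F m - mid) / ((1 - (c - m)) - 1/2)
  else podT F (x - (1 - c))

/-- The pod-comparison functional Δ. -/
noncomputable def Delta (p q : ℝ → ℝ) : ℝ :=
  ∑' n : ℕ, (2:ℝ)⁻¹ ^ (n+2) *
    min (⨆ x : Set.Icc (((n:ℝ)+2)⁻¹) (1 - ((n:ℝ)+2)⁻¹), |1 / p x - 1 / q x|) 1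

/-- The Hausdorff-type function d̄ = max_i min_j d′. -/
noncomputable def dbar (F G : CoalPair) : ℝ :=
  max (min (dprime F.p1 G.p1) (dprime F.p1 G.p2))
      (min (dprime F.p2 G.p1) (dprime F.p2 G.p2))

/-- The metric d̃ = d̄ + Δ on 𝒞. -/
noncomputable def dtilde (F G : CoalPair) : ℝ :=
  dbar F G + Delta (stdPod F) (stdPod G)


namespace CCom

open Real hiding artanh

lemma tanh_formula (x : ℝ) : Real.tanh x = (Real.exp (2*x) - 1) / (Real.exp (2*x) + 1) := by
  rw [Real.tanh_eq_sinh_div_cosh, Real.sinh_eq, Real.cosh_eq]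
  have h1 : Real.exp x > 0 := Real.exp_pos x
  have h2 : Real.exp (-x) > 0 := Real.exp_pos (-x)
  have h3 : Real.exp x * Real.exp (-x) = 1 := by rw [← Real.exp_add]; simp
  have h4 : Real.exp (2*x) = Real.exp x * Real.exp x := by rw [← Real.exp_add]; ring_nf
  rw [h4]
  have h5 : Real.exp x * Real.exp x + 1 > 0 := by positivity
  have h6 : Real.exp x + Real.exp (-x) > 0 := by positivity
  field_simp
  nlinarith [h3]

lemma tanh_lt_one (x : ℝ) : Real.tanh x < 1 := by
  rw [tanh_formula]
  have h : Real.exp (2*x) + 1 > 0 := by positivity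
  rw [div_lt_one h]; linarith

lemma neg_one_lt_tanh (x : ℝ) : -1 < Real.tanh x := by
  rw [tanh_formula]
  have h : Real.exp (2*x) + 1 > 0 := by positivity
  rw [lt_div_iff₀ h]
  nlinarith [Real.exp_pos (2*x)]

lemma tanh_strictMono : StrictMono Real.tanh := by
  intro a b hab
  rw [tanh_formula, tanh_formula]
  have hE : Real.exp (2*a) > 0 := Real.exp_pos _
  have hD : Real.exp (2*b) > 0 := Real.exp_pos _
  have hED : Real.exp (2*a) < Real.exp (2*b) := Real.exp_lt_exp.2 (by linarith)
  rw [div_lt_div_iff₀ (by positivity) (by positivity)]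
  nlinarith

lemma tanh_nonneg {x : ℝ} (hx : 0 ≤ x) : 0 ≤ Real.tanh x := by
  have := tanh_strictMono.le_iff_le.2 hx
  simpa [Real.tanh_zero] using this

lemma artanh_tanh (x : ℝ) : artanh (Real.tanh x) = x := by
  have h1 : (1 + Real.tanh x) / (1 - Real.tanh x) = Real.exp (2*x) := by
    rw [tanh_formula]
    have h : Real.exp (2*x) + 1 > 0 := by positivity
    have h2 : (1:ℝ) - (Real.exp (2*x) - 1) / (Real.exp (2*x) + 1) = 2 / (Real.exp (2*x) + 1) := by
      field_simp; ring
    have h3 : (1:ℝ) + (Real.exp (2*x) - 1) / (Real.exp (2*x) + 1)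
        = 2 * Real.exp (2*x) / (Real.exp (2*x) + 1) := by field_simp; ring
    rw [h2, h3]
    rw [div_div_div_eq]
    field_simp
  unfold artanh
  rw [h1, Real.log_exp]; ring

lemma tanh_artanh {y : ℝ} (h1 : -1 < y) (h2 : y < 1) : Real.tanh (artanh y) = y := by
  have hu : (1 + y) / (1 - y) > 0 := by
    apply div_pos <;> linarith
  rw [tanh_formula]
  unfold artanh
  have : 2 * (Real.log ((1 + y) / (1 - y)) / 2) = Real.log ((1+y)/(1-y)) := by ring
  rw [this, Real.exp_log hu]
  have h3 : (1:ℝ) - y ≠ 0 := by linarith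
  field_simp
  ring

lemma continuous_tanh : Continuous Real.tanh := by
  have : Real.tanh = fun x => Real.sinh x / Real.cosh x := by
    funext x; exact Real.tanh_eq_sinh_div_cosh x
  rw [this]
  exact Real.continuous_sinh.div Real.continuous_cosh (fun x => (Real.cosh_pos x).ne')

lemma continuousAt_artanh {y : ℝ} (h1 : -1 < y) (h2 : y < 1) : ContinuousAt artanh y := by
  unfold artanh
  apply ContinuousAt.div_const
  have hinner : ContinuousAt (fun x : ℝ => (1 + x) / (1 - x)) y := by
    apply ContinuousAt.div
    · fun_prop
    · fun_prop
    · intro h; linarith [sub_eq_zero.1 h]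
  have hlog : ContinuousAt Real.log ((1 + y) / (1 - y)) := by
    apply Real.continuousAt_log
    have : (1 + y) / (1 - y) > 0 := by apply div_pos <;> linarith
    exact this.ne'
  exact ContinuousAt.comp (x := y) hlog hinner

lemma tanh_mem {x : ℝ} : Real.tanh x ∈ Set.Ioo (-1:ℝ) 1 := ⟨neg_one_lt_tanh x, tanh_lt_one x⟩

lemma artanh_lt_iff {y : ℝ} (h1 : -1 < y) (h2 : y < 1) (t : ℝ) :
    artanh y < t ↔ y < Real.tanh t := by
  constructor
  · intro h
    have := tanh_strictMono h
    rwa [tanh_artanh h1 h2] at this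
  · intro h
    have : Real.tanh (artanh y) < Real.tanh t := by rwa [tanh_artanh h1 h2]
    exact tanh_strictMono.lt_iff_lt.1 this

lemma lt_artanh_iff {y : ℝ} (h1 : -1 < y) (h2 : y < 1) (t : ℝ) :
    t < artanh y ↔ Real.tanh t < y := by
  constructor
  · intro h
    have := tanh_strictMono h
    rwa [tanh_artanh h1 h2] at this
  · intro h
    have : Real.tanh t < Real.tanh (artanh y) := by rwa [tanh_artanh h1 h2]
    exact tanh_strictMono.lt_iff_lt.1 this

end CCom
namespace CCom
open Set Filter Topology

/-! ### supAbs and dprime plumbing -/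

lemma IccN_nonempty (n : ℕ) : Nonempty (Set.Icc (0:ℝ) ((n:ℝ)+1)) := by
  refine ⟨⟨0, ?_⟩⟩; constructor <;> [rfl; positivity]

lemma supAbs_bddAbove (γ η : PathP) (n : ℕ) :
    BddAbove (Set.range fun t : Set.Icc (0:ℝ) ((n:ℝ)+1) => |γ.f t - η.f t|) := by
  have hc : ContinuousOn (fun t : ℝ => |γ.f t - η.f t|) (Set.Icc (0:ℝ) ((n:ℝ)+1)) :=
    ((γ.hf.sub η.hf).abs).continuousOn
  have := (isCompact_Icc (a := (0:ℝ)) (b := (n:ℝ)+1)).bddAbove_image hc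
  rwa [Set.image_eq_range] at this

lemma abs_le_supAbs {γ η : PathP} {n : ℕ} {t : ℝ} (ht : t ∈ Set.Icc (0:ℝ) ((n:ℝ)+1)) :
    |γ.f t - η.f t| ≤ supAbs γ η n :=
  le_ciSup (supAbs_bddAbove γ η n) (⟨t, ht⟩ : Set.Icc (0:ℝ) ((n:ℝ)+1))

lemma supAbs_nonneg (γ η : PathP) (n : ℕ) : 0 ≤ supAbs γ η n :=
  le_trans (abs_nonneg _) (abs_le_supAbs ⟨le_refl 0, by positivity⟩)

lemma supAbs_le {γ η : PathP} {n : ℕ} {M : ℝ}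
    (h : ∀ t ∈ Set.Icc (0:ℝ) ((n:ℝ)+1), |γ.f t - η.f t| ≤ M) : supAbs γ η n ≤ M := by
  have := IccN_nonempty n
  exact ciSup_le (fun t => h t t.2)

lemma supAbs_symm (γ η : PathP) (n : ℕ) : supAbs γ η n = supAbs η γ n := by
  unfold supAbs; congr 1; funext t; rw [abs_sub_comm]

lemma supAbs_triangle (γ η ζ : PathP) (n : ℕ) :
    supAbs γ ζ n ≤ supAbs γ η n + supAbs η ζ n := by
  apply supAbs_le
  intro t ht
  calc |γ.f t - ζ.f t| ≤ |γ.f t - η.f t| + |η.f t - ζ.f t| := abs_sub_le _ _ _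
    _ ≤ _ := add_le_add (abs_le_supAbs ht) (abs_le_supAbs ht)

lemma min_one_nonneg {a : ℝ} (ha : 0 ≤ a) : 0 ≤ min a 1 := le_min ha zero_le_one

lemma min_add_min {a b : ℝ} (ha : 0 ≤ a) (hb : 0 ≤ b) :
    min (a + b) 1 ≤ min a 1 + min b 1 := by
  rcases le_total a 1 with h1 | h1
  · rcases le_total b 1 with h2 | h2
    · rw [min_eq_left h1, min_eq_left h2]; exact min_le_left _ _
    · rw [min_eq_left h1, min_eq_right h2]
      have := min_le_right (a+b) 1
      linarith
  · rw [min_eq_right h1]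
    have := min_le_right (a+b) 1
    have := min_one_nonneg hb
    linarith

lemma dsum_summable (γ η : PathP) :
    Summable (fun n : ℕ => (2:ℝ)⁻¹ ^ (n+1) * min (supAbs γ η n) 1) := by
  apply Summable.of_nonneg_of_le
    (f := fun n : ℕ => (2:ℝ)⁻¹ * (2:ℝ)⁻¹ ^ n)
  · intro n; exact mul_nonneg (by positivity) (min_one_nonneg (supAbs_nonneg γ η n))
  · intro n
    rw [pow_succ]
    calc (2:ℝ)⁻¹ ^ n * (2:ℝ)⁻¹ * min (supAbs γ η n) 1 ≤ (2:ℝ)⁻¹ ^ n * (2:ℝ)⁻¹ * 1 := by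
          apply mul_le_mul_of_nonneg_left (min_le_right _ _) (by positivity)
      _ = (2:ℝ)⁻¹ * (2:ℝ)⁻¹ ^ n := by ring
  · exact (summable_geometric_of_lt_one (by norm_num) (by norm_num)).mul_left _

lemma geom_tail (N : ℕ) : ∑' i : ℕ, (2:ℝ)⁻¹ ^ (i + N + 1) = (2:ℝ)⁻¹ ^ N := by
  have h : ∀ i : ℕ, (2:ℝ)⁻¹ ^ (i + N + 1) = (2:ℝ)⁻¹ ^ (N+1) * (2:ℝ)⁻¹ ^ i := by
    intro i; rw [← pow_add]; ring_nf
  rw [tsum_congr h, tsum_mul_left, tsum_geometric_of_lt_one (by norm_num) (by norm_num)]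
  rw [pow_succ]
  norm_num
  ring

lemma geom_summable : Summable (fun i : ℕ => (2:ℝ)⁻¹ ^ (i + 1)) := by
  have := (summable_geometric_of_lt_one (r := (2:ℝ)⁻¹) (by norm_num) (by norm_num)).mul_left (2:ℝ)⁻¹
  apply this.congr
  intro n; rw [pow_succ]; ring

lemma dprime_nonneg (γ η : PathP) : 0 ≤ dprime γ η :=
  le_trans (abs_nonneg _) (le_max_left _ _)

lemma dprime_symm (γ η : PathP) : dprime γ η = dprime η γ := by
  unfold dprime
  rw [abs_sub_comm]
  congr 1
  apply tsum_congr; intro n; rw [supAbs_symm]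

lemma t0_le_dprime (γ η : PathP) : |γ.t0 - η.t0| ≤ dprime γ η := le_max_left _ _

lemma term_le_dprime (γ η : PathP) (n : ℕ) :
    (2:ℝ)⁻¹ ^ (n+1) * min (supAbs γ η n) 1 ≤ dprime γ η := by
  refine le_trans ?_ (le_max_right _ _)
  exact Summable.le_tsum (dsum_summable γ η) n
    (fun m _ => mul_nonneg (by positivity) (min_one_nonneg (supAbs_nonneg γ η m)))

lemma supAbs_le_of_dprime {γ η : PathP} {n : ℕ} {ε : ℝ}
    (h : dprime γ η ≤ ε) (hsmall : 2 ^ (n+1) * ε < 1) :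
    supAbs γ η n ≤ 2 ^ (n+1) * ε := by
  have h1 := le_trans (term_le_dprime γ η n) h
  have h2 : min (supAbs γ η n) 1 ≤ 2 ^ (n+1) * ε := by
    have hp : ((2:ℝ)⁻¹) ^ (n+1) * (2 ^ (n+1) * ε) = ε := by
      rw [← mul_assoc, ← mul_pow]
      norm_num
    nlinarith [pow_pos (show (0:ℝ) < 2⁻¹ by norm_num) (n+1)]
  rcases min_cases (supAbs γ η n) 1 with ⟨he, _⟩ | ⟨he, hlt⟩
  · rwa [he] at h2
  · rw [he] at h2; linarith

lemma dprime_triangle (γ η ζ : PathP) : dprime γ ζ ≤ dprime γ η + dprime η ζ := by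
  apply max_le
  · calc |γ.t0 - ζ.t0| ≤ |γ.t0 - η.t0| + |η.t0 - ζ.t0| := abs_sub_le _ _ _
      _ ≤ _ := add_le_add (t0_le_dprime _ _) (t0_le_dprime _ _)
  · calc (∑' n : ℕ, (2:ℝ)⁻¹ ^ (n+1) * min (supAbs γ ζ n) 1)
        ≤ ∑' n : ℕ, ((2:ℝ)⁻¹ ^ (n+1) * min (supAbs γ η n) 1
            + (2:ℝ)⁻¹ ^ (n+1) * min (supAbs η ζ n) 1) := by
          apply Summable.tsum_le_tsum _ (dsum_summable γ ζ) ((dsum_summable γ η).add (dsum_summable η ζ))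
          intro n
          rw [← mul_add]
          apply mul_le_mul_of_nonneg_left _ (by positivity)
          calc min (supAbs γ ζ n) 1 ≤ min (supAbs γ η n + supAbs η ζ n) 1 := by
                apply min_le_min _ le_rfl
                exact supAbs_triangle γ η ζ n
            _ ≤ _ := min_add_min (supAbs_nonneg _ _ _) (supAbs_nonneg _ _ _)
      _ = (∑' n : ℕ, (2:ℝ)⁻¹ ^ (n+1) * min (supAbs γ η n) 1)
            + ∑' n : ℕ, (2:ℝ)⁻¹ ^ (n+1) * min (supAbs η ζ n) 1 :=
          Summable.tsum_add (dsum_summable γ η) (dsum_summable η ζ)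
      _ ≤ _ := add_le_add (le_max_right _ _) (le_max_right _ _)

lemma dprime_le {γ η : PathP} (N : ℕ) {ε : ℝ} (hε : 0 ≤ ε)
    (ht0 : |γ.t0 - η.t0| ≤ ε) (hsup : ∀ n < N, supAbs γ η n ≤ ε) :
    dprime γ η ≤ ε + (2:ℝ)⁻¹ ^ N := by
  apply max_le
  · have : (0:ℝ) ≤ (2:ℝ)⁻¹ ^ N := by positivity
    linarith
  · rw [← Summable.sum_add_tsum_nat_add N (dsum_summable γ η)]
    have hhead : ∑ n ∈ Finset.range N, (2:ℝ)⁻¹ ^ (n+1) * min (supAbs γ η n) 1 ≤ ε := by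
      calc ∑ n ∈ Finset.range N, (2:ℝ)⁻¹ ^ (n+1) * min (supAbs γ η n) 1
          ≤ ∑ n ∈ Finset.range N, (2:ℝ)⁻¹ ^ (n+1) * ε := by
            apply Finset.sum_le_sum
            intro n hn
            apply mul_le_mul_of_nonneg_left _ (by positivity)
            exact le_trans (min_le_left _ _) (hsup n (Finset.mem_range.1 hn))
        _ = (∑ n ∈ Finset.range N, (2:ℝ)⁻¹ ^ (n+1)) * ε := by rw [Finset.sum_mul]
        _ ≤ 1 * ε := by
            apply mul_le_mul_of_nonneg_right _ hε
            have h1 : ∑ n ∈ Finset.range N, (2:ℝ)⁻¹ ^ (n+1)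
                ≤ ∑' n : ℕ, (2:ℝ)⁻¹ ^ (n+1) := by
              apply Summable.sum_le_tsum _ (fun m _ => by positivity) geom_summable
            have h2 : ∑' n : ℕ, (2:ℝ)⁻¹ ^ (n+1) = 1 := by
              have := geom_tail 0
              simpa using this
            linarith
        _ = ε := one_mul ε
    have htail : ∑' n : ℕ, (2:ℝ)⁻¹ ^ ((n + N)+1) * min (supAbs γ η (n + N)) 1
        ≤ (2:ℝ)⁻¹ ^ N := by
      calc ∑' n : ℕ, (2:ℝ)⁻¹ ^ ((n + N)+1) * min (supAbs γ η (n + N)) 1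
          ≤ ∑' n : ℕ, (2:ℝ)⁻¹ ^ (n + N + 1) := by
            apply Summable.tsum_le_tsum _ ((dsum_summable γ η).comp_injective (add_left_injective N))
              ((summable_geometric_of_lt_one (r := (2:ℝ)⁻¹) (by norm_num)
                  (by norm_num)).mul_left ((2:ℝ)⁻¹ ^ (N+1)) |>.congr
                  (fun i => by rw [← pow_add]; ring_nf))
            intro n
            have h5 : (2:ℝ)⁻¹ ^ ((n + N)+1) * min (supAbs γ η (n + N)) 1
                ≤ (2:ℝ)⁻¹ ^ ((n+N)+1) * 1 :=
              mul_le_mul_of_nonneg_left (min_le_right _ _) (by positivity)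
            rw [mul_one] at h5
            exact h5
        _ = (2:ℝ)⁻¹ ^ N := geom_tail N
    exact add_le_add hhead htail

end CCom
namespace CCom
open Set Filter Topology

/-! ### Windows and Delta plumbing -/

/-- The window `[1/(n+2), 1-1/(n+2)]`. -/
def Wind (n : ℕ) : Set ℝ := Set.Icc (((n:ℝ)+2)⁻¹) (1 - ((n:ℝ)+2)⁻¹)

lemma Wind_lo_pos (n : ℕ) : 0 < (((n:ℝ)+2)⁻¹) := by positivity

lemma Wind_lo_le_hi (n : ℕ) : (((n:ℝ)+2)⁻¹) ≤ 1 - ((n:ℝ)+2)⁻¹ := by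
  have h2 : (2:ℝ) ≤ (n:ℝ) + 2 := by
    have : (0:ℝ) ≤ (n:ℝ) := Nat.cast_nonneg n
    linarith
  have := inv_anti₀ (by norm_num : (0:ℝ) < 2) h2
  norm_num at this
  linarith

lemma Wind_nonempty (n : ℕ) : Nonempty (Wind n) := by
  exact ⟨⟨_, le_refl _, Wind_lo_le_hi n⟩⟩

lemma Wind_subset (n : ℕ) : Wind n ⊆ Set.Ioo (0:ℝ) 1 := by
  intro x hx
  have h1 := hx.1; have h2 := hx.2
  have := Wind_lo_pos n
  constructor <;> nlinarith

lemma mem_Wind_of (n : ℕ) {x : ℝ} (h1 : (((n:ℝ)+2)⁻¹) ≤ x) (h2 : x ≤ 1 - ((n:ℝ)+2)⁻¹) :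
    x ∈ Wind n := ⟨h1, h2⟩

/-- exists a window containing a neighborhood of `x ∈ (0,1)`. -/
lemma exists_Wind (x : ℝ) (hx : x ∈ Set.Ioo (0:ℝ) 1) :
    ∃ n : ℕ, (((n:ℝ)+2)⁻¹) < x ∧ x < 1 - ((n:ℝ)+2)⁻¹ := by
  obtain ⟨n, hn⟩ := exists_nat_gt (max x⁻¹ (1-x)⁻¹)
  have hn2 : (0:ℝ) < (n:ℝ) + 2 := by positivity
  have hn2' : ((n:ℝ)+2) * ((n:ℝ)+2)⁻¹ = 1 := mul_inv_cancel₀ (ne_of_gt hn2)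
  refine ⟨n, ?_, ?_⟩
  · have h1 : x⁻¹ < (n:ℝ) + 2 := by
      have := le_max_left x⁻¹ (1-x)⁻¹; linarith
    have hxp := hx.1
    have hx' : x * x⁻¹ = 1 := mul_inv_cancel₀ (ne_of_gt hxp)
    have hx1 : (1:ℝ) < x * ((n:ℝ)+2) := by nlinarith
    nlinarith
  · have h1 : (1-x)⁻¹ < (n:ℝ) + 2 := by
      have := le_max_right x⁻¹ (1-x)⁻¹; linarith
    have h2 : (0:ℝ) < 1 - x := by have := hx.2; linarith
    have hx' : (1-x) * (1-x)⁻¹ = 1 := mul_inv_cancel₀ (ne_of_gt h2)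
    have hx1 : (1:ℝ) < (1-x) * ((n:ℝ)+2) := by nlinarith
    nlinarith

/-- The sup appearing in the `n`-th term of `Delta`. -/
noncomputable def DSup (p q : ℝ → ℝ) (n : ℕ) : ℝ :=
  ⨆ x : Wind n, |1 / p x - 1 / q x|

lemma Delta_eq (p q : ℝ → ℝ) :
    Delta p q = ∑' n : ℕ, (2:ℝ)⁻¹ ^ (n+2) * min (DSup p q n) 1 := rfl

lemma DSup_nonneg (p q : ℝ → ℝ) (n : ℕ) : 0 ≤ DSup p q n :=
  Real.iSup_nonneg (fun x => abs_nonneg _)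

lemma DSup_symm (p q : ℝ → ℝ) (n : ℕ) : DSup p q n = DSup q p n := by
  unfold DSup; congr 1; funext x; rw [abs_sub_comm]

lemma Dsum_summable (p q : ℝ → ℝ) :
    Summable (fun n : ℕ => (2:ℝ)⁻¹ ^ (n+2) * min (DSup p q n) 1) := by
  apply Summable.of_nonneg_of_le
    (f := fun n : ℕ => (2:ℝ)⁻¹ ^ 2 * (2:ℝ)⁻¹ ^ n)
  · intro n; exact mul_nonneg (by positivity) (min_one_nonneg (DSup_nonneg p q n))
  · intro n
    calc (2:ℝ)⁻¹ ^ (n+2) * min (DSup p q n) 1 ≤ (2:ℝ)⁻¹ ^ (n+2) * 1 :=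
          mul_le_mul_of_nonneg_left (min_le_right _ _) (by positivity)
      _ = (2:ℝ)⁻¹ ^ 2 * (2:ℝ)⁻¹ ^ n := by rw [mul_one, ← pow_add]; ring_nf
  · exact (summable_geometric_of_lt_one (by norm_num) (by norm_num)).mul_left _

lemma Delta_nonneg (p q : ℝ → ℝ) : 0 ≤ Delta p q := by
  rw [Delta_eq]
  exact tsum_nonneg (fun n => mul_nonneg (by positivity) (min_one_nonneg (DSup_nonneg p q n)))

lemma Delta_symm (p q : ℝ → ℝ) : Delta p q = Delta q p := by
  rw [Delta_eq, Delta_eq]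
  exact tsum_congr (fun n => by rw [DSup_symm])

lemma term_le_Delta (p q : ℝ → ℝ) (n : ℕ) :
    (2:ℝ)⁻¹ ^ (n+2) * min (DSup p q n) 1 ≤ Delta p q := by
  rw [Delta_eq]
  exact Summable.le_tsum (Dsum_summable p q) n
    (fun m _ => mul_nonneg (by positivity) (min_one_nonneg (DSup_nonneg p q m)))

lemma DSup_le_of_Delta {p q : ℝ → ℝ} {n : ℕ} {ε : ℝ}
    (h : Delta p q ≤ ε) (hsmall : 2 ^ (n+2) * ε < 1) :
    DSup p q n ≤ 2 ^ (n+2) * ε := by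
  have h1 := le_trans (term_le_Delta p q n) h
  have h2 : min (DSup p q n) 1 ≤ 2 ^ (n+2) * ε := by
    have hp : ((2:ℝ)⁻¹) ^ (n+2) * (2 ^ (n+2) * ε) = ε := by
      rw [← mul_assoc, ← mul_pow]; norm_num
    nlinarith [pow_pos (show (0:ℝ) < 2⁻¹ by norm_num) (n+2)]
  rcases min_cases (DSup p q n) 1 with ⟨he, _⟩ | ⟨he, hlt⟩
  · rwa [he] at h2
  · rw [he] at h2; linarith

lemma abs_le_DSup {p q : ℝ → ℝ} {n : ℕ}
    (hbdd : BddAbove (Set.range fun x : Wind n => |1 / p x - 1 / q x|))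
    {x : ℝ} (hx : x ∈ Wind n) : |1 / p x - 1 / q x| ≤ DSup p q n :=
  le_ciSup hbdd (⟨x, hx⟩ : Wind n)

lemma DSup_le {p q : ℝ → ℝ} {n : ℕ} {M : ℝ}
    (h : ∀ x ∈ Wind n, |1 / p x - 1 / q x| ≤ M) : DSup p q n ≤ M := by
  have := Wind_nonempty n
  exact ciSup_le (fun x => h x x.2)

lemma Delta_triangle {p q r : ℝ → ℝ}
    (hb1 : ∀ n, BddAbove (Set.range fun x : Wind n => |1 / p x - 1 / r x|))
    (hb2 : ∀ n, BddAbove (Set.range fun x : Wind n => |1 / r x - 1 / q x|)) :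
    Delta p q ≤ Delta p r + Delta r q := by
  rw [Delta_eq, Delta_eq, Delta_eq]
  calc (∑' n : ℕ, (2:ℝ)⁻¹ ^ (n+2) * min (DSup p q n) 1)
      ≤ ∑' n : ℕ, ((2:ℝ)⁻¹ ^ (n+2) * min (DSup p r n) 1
          + (2:ℝ)⁻¹ ^ (n+2) * min (DSup r q n) 1) := by
        apply Summable.tsum_le_tsum _ (Dsum_summable p q) ((Dsum_summable p r).add (Dsum_summable r q))
        intro n
        rw [← mul_add]
        apply mul_le_mul_of_nonneg_left _ (by positivity)
        calc min (DSup p q n) 1 ≤ min (DSup p r n + DSup r q n) 1 := by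
              apply min_le_min _ le_rfl
              apply DSup_le
              intro x hx
              calc |1 / p x - 1 / q x| ≤ |1 / p x - 1 / r x| + |1 / r x - 1 / q x| :=
                    abs_sub_le _ _ _
                _ ≤ _ := add_le_add (abs_le_DSup (hb1 n) hx) (abs_le_DSup (hb2 n) hx)
          _ ≤ _ := min_add_min (DSup_nonneg _ _ _) (DSup_nonneg _ _ _)
    _ = _ := Summable.tsum_add (Dsum_summable p r) (Dsum_summable r q)

lemma Delta_le {p q : ℝ → ℝ} (N : ℕ) {ε : ℝ} (hε : 0 ≤ ε)
    (hsup : ∀ n < N, min (DSup p q n) 1 ≤ ε) :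
    Delta p q ≤ ε + (2:ℝ)⁻¹ ^ N := by
  rw [Delta_eq]
  rw [← Summable.sum_add_tsum_nat_add N (Dsum_summable p q)]
  have hhead : ∑ n ∈ Finset.range N, (2:ℝ)⁻¹ ^ (n+2) * min (DSup p q n) 1 ≤ ε := by
    calc ∑ n ∈ Finset.range N, (2:ℝ)⁻¹ ^ (n+2) * min (DSup p q n) 1
        ≤ ∑ n ∈ Finset.range N, (2:ℝ)⁻¹ ^ (n+2) * ε := by
          apply Finset.sum_le_sum
          intro n hn
          exact mul_le_mul_of_nonneg_left (hsup n (Finset.mem_range.1 hn)) (by positivity)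
      _ = (∑ n ∈ Finset.range N, (2:ℝ)⁻¹ ^ (n+2)) * ε := by rw [Finset.sum_mul]
      _ ≤ 1 * ε := by
          apply mul_le_mul_of_nonneg_right _ hε
          have h1 : ∑ n ∈ Finset.range N, (2:ℝ)⁻¹ ^ (n+2)
              ≤ ∑' n : ℕ, (2:ℝ)⁻¹ ^ (n+2) := by
            apply Summable.sum_le_tsum _ (fun m _ => by positivity)
            exact ((summable_geometric_of_lt_one (r := (2:ℝ)⁻¹) (by norm_num)
              (by norm_num)).mul_left ((2:ℝ)⁻¹ ^ 2)).congr
              (fun i => by rw [← pow_add]; ring_nf)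
          have h2 : ∑' n : ℕ, (2:ℝ)⁻¹ ^ (n+2) = (2:ℝ)⁻¹ := by
            have := geom_tail 1
            have h3 : ∀ n : ℕ, (2:ℝ)⁻¹ ^ (n+2) = (2:ℝ)⁻¹ ^ (n + 1 + 1) := by
              intro n; ring_nf
            rw [tsum_congr h3, this]
            norm_num
          have : (2:ℝ)⁻¹ ≤ 1 := by norm_num
          linarith
      _ = ε := one_mul ε
  have htail : ∑' n : ℕ, (2:ℝ)⁻¹ ^ ((n + N)+2) * min (DSup p q (n + N)) 1
      ≤ (2:ℝ)⁻¹ ^ N := by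
    calc ∑' n : ℕ, (2:ℝ)⁻¹ ^ ((n + N)+2) * min (DSup p q (n + N)) 1
        ≤ ∑' n : ℕ, (2:ℝ)⁻¹ ^ (n + N + 1) := by
          apply Summable.tsum_le_tsum _ ((Dsum_summable p q).comp_injective (add_left_injective N))
            ((summable_geometric_of_lt_one (r := (2:ℝ)⁻¹) (by norm_num)
                (by norm_num)).mul_left ((2:ℝ)⁻¹ ^ (N+1)) |>.congr
                (fun i => by rw [← pow_add]; ring_nf))
          intro n
          have h5 : (2:ℝ)⁻¹ ^ ((n + N)+2) * min (DSup p q (n + N)) 1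
              ≤ (2:ℝ)⁻¹ ^ ((n+N)+2) * 1 :=
            mul_le_mul_of_nonneg_left (min_le_right _ _) (by positivity)
          rw [mul_one] at h5
          refine le_trans h5 ?_
          apply pow_le_pow_of_le_one (by norm_num) (by norm_num)
          omega
      _ = (2:ℝ)⁻¹ ^ N := geom_tail N
  exact add_le_add hhead htail

/-! ### dbar and dtilde basics -/

lemma dbar_nonneg (F G : CoalPair) : 0 ≤ dbar F G := by
  unfold dbar
  exact le_max_of_le_left (le_min (dprime_nonneg _ _) (dprime_nonneg _ _))

lemma dbar_le_pair (F G : CoalPair)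
    {d1 d2 : ℝ} (h1 : dprime F.p1 G.p1 ≤ d1 ∨ dprime F.p1 G.p2 ≤ d1)
    (h2 : dprime F.p2 G.p1 ≤ d2 ∨ dprime F.p2 G.p2 ≤ d2) :
    dbar F G ≤ max d1 d2 := by
  unfold dbar
  apply max_le
  · apply le_max_of_le_left
    rcases h1 with h | h
    · exact le_trans (min_le_left _ _) h
    · exact le_trans (min_le_right _ _) h
  · apply le_max_of_le_right
    rcases h2 with h | h
    · exact le_trans (min_le_left _ _) h
    · exact le_trans (min_le_right _ _) h

lemma dbar_le_dtilde (F G : CoalPair) : dbar F G ≤ dtilde F G := by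
  unfold dtilde
  have := Delta_nonneg (stdPod F) (stdPod G)
  linarith

lemma Delta_le_dtilde (F G : CoalPair) : Delta (stdPod F) (stdPod G) ≤ dtilde F G := by
  unfold dtilde
  have := dbar_nonneg F G
  linarith

end CCom
namespace CCom
open Set Filter Topology

/-! ### Basic facts about coalescing pairs -/

/-- The pod in real time. -/
def pod (X : CoalPair) (t : ℝ) : ℝ := X.p2.f t - X.p1.f t

lemma pod_continuous (X : CoalPair) : Continuous (pod X) := X.p2.hf.sub X.p1.hf

lemma pod_nonneg (X : CoalPair) {t : ℝ} (h : tPlus X ≤ t) : 0 ≤ pod X t :=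
  sub_nonneg.2 (X.ordered t h)

lemma coalSet_bddBelow (X : CoalPair) : BddBelow (coalSet X.p1 X.p2) :=
  ⟨tPlus X, fun t ht => le_of_lt ht.1⟩

lemma tPlus_le_tc {X : CoalPair} (h : tcFinite X) : tPlus X ≤ tcReal X :=
  le_csInf h (fun t ht => le_of_lt ht.1)

lemma mem_coalSet {X : CoalPair} {t : ℝ} :
    t ∈ coalSet X.p1 X.p2 ↔ tPlus X < t ∧ pod X t = 0 := by
  unfold coalSet tPlus pod
  constructor
  · rintro ⟨h1, h2⟩; exact ⟨h1, by rw [h2]; ring⟩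
  · rintro ⟨h1, h2⟩; exact ⟨h1, by linarith [sub_eq_zero.1 h2]⟩

lemma pod_pos_inside {X : CoalPair} (h : tcFinite X) {t : ℝ}
    (h1 : tPlus X < t) (h2 : t < tcReal X) : 0 < pod X t := by
  rcases lt_or_eq_of_le (pod_nonneg X h1.le) with hp | hp
  · exact hp
  · exfalso
    have : t ∈ coalSet X.p1 X.p2 := mem_coalSet.2 ⟨h1, hp.symm⟩
    have := csInf_le (coalSet_bddBelow X) this
    unfold tcReal at h2
    linarith

lemma pod_pos_empty {X : CoalPair} (h : ¬ tcFinite X) {t : ℝ}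
    (h1 : tPlus X < t) : 0 < pod X t := by
  rcases lt_or_eq_of_le (pod_nonneg X h1.le) with hp | hp
  · exact hp
  · exact absurd ⟨t, mem_coalSet.2 ⟨h1, hp.symm⟩⟩ h

lemma pod_zero_after {X : CoalPair} (h : tcFinite X) {t : ℝ}
    (ht : tcReal X ≤ t) : pod X t = 0 := by
  rcases X.coal with hc | hc
  · exfalso
    unfold tcFinite at h
    rw [hc] at h
    exact Set.not_nonempty_empty h
  · have := hc t ht
    unfold pod; rw [this]; ring

lemma tPlus_mem (X : CoalPair) : tPlus X ∈ Set.Icc (0:ℝ) 1 := by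
  unfold tPlus
  have h1 := X.p1.ht0; have h2 := X.p2.ht0
  constructor
  · exact le_max_of_le_left h1.1
  · exact max_le h1.2 h2.2

lemma ttPlus_nonneg (X : CoalPair) : 0 ≤ ttPlus X := tanh_nonneg (tPlus_mem X).1

lemma ttPlus_lt_one (X : CoalPair) : ttPlus X < 1 := tanh_lt_one _

lemma ttc_le_one (X : CoalPair) : ttc X ≤ 1 := by
  unfold ttc
  split
  · exact (tanh_lt_one _).le
  · exact le_refl 1

lemma ttPlus_le_ttc (X : CoalPair) : ttPlus X ≤ ttc X := by
  unfold ttc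
  split
  · exact tanh_strictMono.le_iff_le.2 (tPlus_le_tc ‹_›)
  · exact (ttPlus_lt_one X).le

lemma ttm_eq (X : CoalPair) : ttm X = (ttPlus X + ttc X) / 2 := rfl

lemma ttc_lt_one {X : CoalPair} (h : tcFinite X) : ttc X < 1 := by
  unfold ttc; rw [if_pos h]; exact tanh_lt_one _

lemma ttc_eq_one {X : CoalPair} (h : ¬ tcFinite X) : ttc X = 1 := by
  unfold ttc; rw [if_neg h]

/-- positivity of the pod strictly inside the pod interval, in tanh time. -/
lemma pod_pos_tanh (X : CoalPair) {y : ℝ} (h1 : ttPlus X < y) (h2 : y < ttc X) :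
    0 < pod X (artanh y) := by
  have hy1 : -1 < y := lt_of_lt_of_le (by norm_num) (le_trans (ttPlus_nonneg X) h1.le)
  have hy2 : y < 1 := lt_of_lt_of_le h2 (ttc_le_one X)
  have hplus : tPlus X < artanh y := by
    rw [lt_artanh_iff hy1 hy2]; exact h1
  by_cases hf : tcFinite X
  · apply pod_pos_inside hf hplus
    rw [artanh_lt_iff hy1 hy2]
    unfold ttc at h2; rw [if_pos hf] at h2; exact h2
  · exact pod_pos_empty hf hplus

lemma pod_zero_tanh {X : CoalPair} (h : tcFinite X) {y : ℝ} (hy : ttc X ≤ y) (hy1 : y < 1) :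
    pod X (artanh y) = 0 := by
  have hy0 : -1 < y := lt_of_lt_of_le (by norm_num) (le_trans (ttPlus_nonneg X) (le_trans (ttPlus_le_ttc X) hy))
  apply pod_zero_after h
  by_contra hcon
  push_neg at hcon
  rw [artanh_lt_iff hy0 hy1] at hcon
  unfold ttc at hy; rw [if_pos h] at hy
  linarith

lemma podT_eq (X : CoalPair) (x : ℝ) : podT X x = pod X (artanh x) := rfl

lemma stdPod_def (X : CoalPair) (x : ℝ) : stdPod X x =
    (if x ≤ ttm X - ttPlus X then podT X (x + ttPlus X)
    else if x ≤ 1/2 then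
      podT X (ttm X) + (x - (ttm X - ttPlus X)) *
        ((podT X (ttm X) + (1 - (ttc X - ttm X))/2) - podT X (ttm X)) / (1/2 - (ttm X - ttPlus X))
    else if x ≤ 1 - (ttc X - ttm X) then
      (podT X (ttm X) + (1 - (ttc X - ttm X))/2) + (x - 1/2) *
        (podT X (ttm X) - (podT X (ttm X) + (1 - (ttc X - ttm X))/2)) / ((1 - (ttc X - ttm X)) - 1/2)
    else podT X (x - (1 - ttc X))) := rfl

lemma breakpoint1_eq (X : CoalPair) : ttm X - ttPlus X = (ttc X - ttPlus X) / 2 := by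
  rw [ttm_eq]; ring

lemma breakpoint3_eq (X : CoalPair) : 1 - (ttc X - ttm X) = 1 - (ttc X - ttPlus X) / 2 := by
  rw [ttm_eq]; ring

lemma breakpoint1_nonneg (X : CoalPair) : 0 ≤ ttm X - ttPlus X := by
  rw [breakpoint1_eq]; linarith [ttPlus_le_ttc X]

lemma breakpoint1_le_half (X : CoalPair) : ttm X - ttPlus X ≤ 1/2 := by
  rw [breakpoint1_eq]; linarith [ttc_le_one X, ttPlus_nonneg X]

lemma half_le_breakpoint3 (X : CoalPair) : 1/2 ≤ 1 - (ttc X - ttm X) := by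
  rw [breakpoint3_eq]; linarith [ttc_le_one X, ttPlus_nonneg X]

lemma breakpoint3_le_one (X : CoalPair) : 1 - (ttc X - ttm X) ≤ 1 := by
  rw [breakpoint3_eq]; linarith [ttPlus_le_ttc X]

lemma breakpoint3_eq' (X : CoalPair) : 1 - (ttc X - ttm X) = 1 - (ttm X - ttPlus X) := by
  rw [breakpoint1_eq, breakpoint3_eq]

/-- Value of `stdPod` on the first piece. -/
lemma stdPod_p1 (X : CoalPair) {x : ℝ} (h : x ≤ ttm X - ttPlus X) :
    stdPod X x = pod X (artanh (x + ttPlus X)) := by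
  rw [stdPod_def, if_pos h, podT_eq]

/-- Value of `stdPod` on the second piece. -/
lemma stdPod_p2 (X : CoalPair) {x : ℝ} (h1 : ¬ x ≤ ttm X - ttPlus X) (h2 : x ≤ 1/2) :
    stdPod X x = podT X (ttm X) + (x - (ttm X - ttPlus X)) *
      ((1 - (ttc X - ttm X))/2) / (1/2 - (ttm X - ttPlus X)) := by
  rw [stdPod_def, if_neg h1, if_pos h2]
  ring_nf

/-- Value of `stdPod` on the third piece. -/
lemma stdPod_p3 (X : CoalPair) {x : ℝ} (h1 : ¬ x ≤ ttm X - ttPlus X) (h2 : ¬ x ≤ 1/2)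
    (h3 : x ≤ 1 - (ttc X - ttm X)) :
    stdPod X x = (podT X (ttm X) + (1 - (ttc X - ttm X))/2) - (x - 1/2) *
      ((1 - (ttc X - ttm X))/2) / ((1 - (ttc X - ttm X)) - 1/2) := by
  rw [stdPod_def, if_neg h1, if_neg h2, if_pos h3]
  ring_nf

/-- Value of `stdPod` on the fourth piece. -/
lemma stdPod_p4 (X : CoalPair) {x : ℝ} (h3 : ¬ x ≤ 1 - (ttc X - ttm X)) :
    stdPod X x = pod X (artanh (x - (1 - ttc X))) := by
  have h1 : ¬ x ≤ ttm X - ttPlus X := by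
    intro hcon
    exact h3 (le_trans hcon (le_trans (breakpoint1_le_half X) (half_le_breakpoint3 X)))
  have h2 : ¬ x ≤ 1/2 := by
    intro hcon
    exact h3 (le_trans hcon (half_le_breakpoint3 X))
  rw [stdPod_def, if_neg h1, if_neg h2, if_neg h3, podT_eq]

lemma ttm_nonneg (X : CoalPair) : 0 ≤ ttm X := by
  rw [ttm_eq]
  linarith [ttPlus_nonneg X, ttPlus_le_ttc X]

lemma ttm_lt_one (X : CoalPair) : ttm X < 1 := by
  rw [ttm_eq]
  linarith [ttPlus_lt_one X, ttc_le_one X]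

lemma tPlus_le_artanh_ttm (X : CoalPair) : tPlus X ≤ artanh (ttm X) := by
  by_contra h
  push_neg at h
  rw [artanh_lt_iff (by linarith [ttm_nonneg X] : (-1:ℝ) < ttm X) (ttm_lt_one X)] at h
  have : ttPlus X ≤ ttm X := by
    rw [ttm_eq]; linarith [ttPlus_le_ttc X]
  unfold ttPlus at this
  linarith

lemma podT_ttm_nonneg (X : CoalPair) : 0 ≤ podT X (ttm X) := by
  rw [podT_eq]
  exact pod_nonneg X (tPlus_le_artanh_ttm X)

lemma podT_ttm_pos {X : CoalPair} (h : ttPlus X < ttc X) : 0 < podT X (ttm X) := by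
  rw [podT_eq]
  apply pod_pos_tanh X
  · rw [ttm_eq]; linarith
  · rw [ttm_eq]; linarith

/-- Positivity of the standard pod inside `(0,1)`. -/
lemma stdPod_pos (X : CoalPair) {x : ℝ} (hx0 : 0 < x) (hx1 : x < 1) : 0 < stdPod X x := by
  have hac := ttPlus_le_ttc X
  have ha0 := ttPlus_nonneg X
  have hc1 := ttc_le_one X
  have hB1 := breakpoint1_eq X
  have hB3 := breakpoint3_eq X
  have hPTm := podT_ttm_nonneg X
  by_cases h1 : x ≤ ttm X - ttPlus X
  · rw [stdPod_p1 X h1]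
    have hlt : ttPlus X < ttc X := by
      by_contra hcon; push_neg at hcon
      have : ttm X - ttPlus X ≤ 0 := by rw [hB1]; linarith
      linarith
    apply pod_pos_tanh X
    · linarith
    · have : x + ttPlus X ≤ ttm X := by linarith
      have hm : ttm X < ttc X := by rw [ttm_eq]; linarith
      linarith
  · by_cases h2 : x ≤ 1/2
    · rw [stdPod_p2 X h1 h2]
      push_neg at h1
      have hD : 0 < 1/2 - (ttm X - ttPlus X) := by linarith
      have hH : 0 < (1 - (ttc X - ttm X))/2 := by rw [hB3] at *; linarith
      have : 0 < (x - (ttm X - ttPlus X)) * ((1 - (ttc X - ttm X))/2) / (1/2 - (ttm X - ttPlus X)) := by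
        apply div_pos _ hD
        apply mul_pos (by linarith) hH
      linarith
    · by_cases h3 : x ≤ 1 - (ttc X - ttm X)
      · rw [stdPod_p3 X h1 h2 h3]
        push_neg at h1 h2
        have hD : 0 < (1 - (ttc X - ttm X)) - 1/2 := by linarith
        have hH : 0 < (1 - (ttc X - ttm X))/2 := by linarith
        rcases lt_or_eq_of_le h3 with h4 | h4
        · have hq : (x - 1/2) / ((1 - (ttc X - ttm X)) - 1/2) < 1 := by
            rw [div_lt_one hD]; linarith
          have hq0 : 0 < (x - 1/2) / ((1 - (ttc X - ttm X)) - 1/2) := by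
            apply div_pos (by linarith) hD
          have heq : (x - 1/2) * ((1 - (ttc X - ttm X))/2) / ((1 - (ttc X - ttm X)) - 1/2)
              = ((x - 1/2) / ((1 - (ttc X - ttm X)) - 1/2)) * ((1 - (ttc X - ttm X))/2) := by
            ring
          rw [heq]
          nlinarith
        · -- x = 1 - (c - m) < 1, so c > m, hence a < c and podT m > 0
          have hcm : 0 < ttc X - ttm X := by linarith
          have hax : ttPlus X < ttc X := by
            rw [ttm_eq] at hcm; linarith
          have hpos := podT_ttm_pos hax
          have hDne : ((1 - (ttc X - ttm X)) - 1/2) ≠ 0 := ne_of_gt hD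
          have hx12 : x - 1/2 = (1 - (ttc X - ttm X)) - 1/2 := by rw [h4]
          have heq : (x - 1/2) * ((1 - (ttc X - ttm X))/2) / ((1 - (ttc X - ttm X)) - 1/2)
              = (1 - (ttc X - ttm X))/2 := by
            rw [hx12, mul_comm, mul_div_assoc, div_self hDne, mul_one]
          rw [heq]
          linarith
      · rw [stdPod_p4 X h3]
        push_neg at h3
        have hma := breakpoint1_nonneg X
        apply pod_pos_tanh X
        · have : ttm X < x - (1 - ttc X) := by rw [hB3] at h3; rw [ttm_eq]; linarith [hB1]
          linarith [this, hma]
        · linarith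

/-! ### Continuity of the standard pod on windows -/

lemma continuousOn_if_le {f g : ℝ → ℝ} {s : Set ℝ} {b : ℝ}
    (hf : ContinuousOn f (s ∩ Set.Iic b)) (hg : ContinuousOn g (s ∩ Set.Ici b))
    (hfg : f b = g b) :
    ContinuousOn (fun x => if x ≤ b then f x else g x) s := by
  intro x hx
  have hsub : s ⊆ (s ∩ Set.Iic b) ∪ (s ∩ Set.Ici b) := by
    intro y hy
    rcases le_total y b with h | h
    · exact Or.inl ⟨hy, h⟩
    · exact Or.inr ⟨hy, h⟩
  apply ContinuousWithinAt.mono _ hsub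
  apply ContinuousWithinAt.union
  · -- on s ∩ Iic b
    by_cases hxb : x ≤ b
    · apply (hf x ⟨hx, hxb⟩).congr
      · intro y hy
        rw [if_pos (show y ≤ b from hy.2)]
      · rw [if_pos hxb]
    · apply continuousWithinAt_of_notMem_closure
      intro hcl
      have : x ∈ Set.Iic b := by
        have := closure_mono (Set.inter_subset_right (s := s) (t := Set.Iic b)) hcl
        rwa [closure_Iic] at this
      exact hxb this
  · -- on s ∩ Ici b
    by_cases hxb : b ≤ x
    · apply (hg x ⟨hx, hxb⟩).congr
      · intro y hy
        by_cases hyb : y ≤ b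
        · have : y = b := le_antisymm hyb hy.2
          rw [if_pos hyb, this, hfg]
        · rw [if_neg hyb]
      · by_cases hxb' : x ≤ b
        · have : x = b := le_antisymm hxb' hxb
          rw [if_pos hxb', this, hfg]
        · rw [if_neg hxb']
    · apply continuousWithinAt_of_notMem_closure
      intro hcl
      have : x ∈ Set.Ici b := by
        have := closure_mono (Set.inter_subset_right (s := s) (t := Set.Ici b)) hcl
        rwa [closure_Ici] at this
      exact hxb this

lemma contOn_pod_artanh (X : CoalPair) (d : ℝ) {s : Set ℝ}
    (h : ∀ x ∈ s, -1 < x + d ∧ x + d < 1) :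
    ContinuousOn (fun x => pod X (artanh (x + d))) s := by
  intro x hx
  have h1 := h x hx
  apply ContinuousAt.continuousWithinAt
  have hart : ContinuousAt artanh (x + d) := continuousAt_artanh h1.1 h1.2
  have hin : ContinuousAt (fun y : ℝ => artanh (y + d)) x :=
    ContinuousAt.comp (x := x) (f := fun y : ℝ => y + d) hart (by fun_prop)
  exact ContinuousAt.comp (x := x) (pod_continuous X).continuousAt hin

lemma ttc_sub_ttPlus_le_one (X : CoalPair) : ttc X - ttPlus X ≤ 1 := by
  linarith [ttc_le_one X, ttPlus_nonneg X]

lemma stdPod_contOn (X : CoalPair) (n : ℕ) : ContinuousOn (stdPod X) (Wind n) := by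
  have hlo := Wind_lo_pos n
  have hhi : 1 - ((n:ℝ)+2)⁻¹ < 1 := by linarith
  have ha0 := ttPlus_nonneg X
  have hc1 := ttc_le_one X
  have hac := ttPlus_le_ttc X
  have hm1 := ttm_lt_one X
  have hfun : stdPod X = fun x =>
      if x ≤ ttm X - ttPlus X then pod X (artanh (x + ttPlus X))
      else if x ≤ 1/2 then
        podT X (ttm X) + (x - (ttm X - ttPlus X)) *
          ((podT X (ttm X) + (1 - (ttc X - ttm X))/2) - podT X (ttm X)) / (1/2 - (ttm X - ttPlus X))
      else if x ≤ 1 - (ttc X - ttm X) then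
        (podT X (ttm X) + (1 - (ttc X - ttm X))/2) + (x - 1/2) *
          (podT X (ttm X) - (podT X (ttm X) + (1 - (ttc X - ttm X))/2)) / ((1 - (ttc X - ttm X)) - 1/2)
      else pod X (artanh (x + (ttc X - 1))) := by
    funext x
    rw [stdPod_def]
    have harg : x - (1 - ttc X) = x + (ttc X - 1) := by ring
    rw [harg]
    simp only [podT_eq]
  rw [hfun]
  by_cases hdeg : ttc X - ttPlus X = 1
  · -- degenerate case: a = 0, c = 1, all breakpoints equal 1/2
    have ha : ttPlus X = 0 := by linarith
    have hc : ttc X = 1 := by linarith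
    have hB : ttm X - ttPlus X = 1/2 := by rw [breakpoint1_eq, hdeg]
    have hB3 : 1 - (ttc X - ttm X) = 1/2 := by rw [breakpoint3_eq, hdeg]; norm_num
    have heq : (fun x =>
        if x ≤ ttm X - ttPlus X then pod X (artanh (x + ttPlus X))
        else if x ≤ 1/2 then
          podT X (ttm X) + (x - (ttm X - ttPlus X)) *
            ((podT X (ttm X) + (1 - (ttc X - ttm X))/2) - podT X (ttm X)) / (1/2 - (ttm X - ttPlus X))
        else if x ≤ 1 - (ttc X - ttm X) then
          (podT X (ttm X) + (1 - (ttc X - ttm X))/2) + (x - 1/2) *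
            (podT X (ttm X) - (podT X (ttm X) + (1 - (ttc X - ttm X))/2)) / ((1 - (ttc X - ttm X)) - 1/2)
        else pod X (artanh (x + (ttc X - 1))))
        = fun x => if x ≤ (1/2 : ℝ) then pod X (artanh (x + ttPlus X))
            else pod X (artanh (x + (ttc X - 1))) := by
      funext x
      by_cases hx : x ≤ (1/2:ℝ)
      · have h1 : x ≤ ttm X - ttPlus X := by rw [hB]; exact hx
        rw [if_pos h1, if_pos hx]
      · have h1 : ¬ x ≤ ttm X - ttPlus X := by rw [hB]; exact hx
        have h3 : ¬ x ≤ 1 - (ttc X - ttm X) := by rw [hB3]; exact hx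
        rw [if_neg h1, if_neg hx, if_neg h3, if_neg hx]
    rw [heq]
    apply continuousOn_if_le
    · apply contOn_pod_artanh
      rintro x ⟨hx1, hx2⟩
      have : x ≤ 1/2 := hx2
      have : (((n:ℝ)+2)⁻¹) ≤ x := hx1.1
      rw [ha]
      constructor <;> linarith
    · apply contOn_pod_artanh
      rintro x ⟨hx1, hx2⟩
      have hb : x ≤ 1 - ((n:ℝ)+2)⁻¹ := hx1.2
      have : (((n:ℝ)+2)⁻¹) ≤ x := hx1.1
      rw [hc]
      constructor <;> linarith
    · rw [ha, hc]; norm_num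
  · -- nondegenerate case
    have hlt : ttc X - ttPlus X < 1 :=
      lt_of_le_of_ne (ttc_sub_ttPlus_le_one X) hdeg
    have hD : 0 < 1/2 - (ttm X - ttPlus X) := by rw [breakpoint1_eq]; linarith
    have hD3 : 0 < (1 - (ttc X - ttm X)) - 1/2 := by rw [breakpoint3_eq]; linarith
    have hBm : ttm X - ttPlus X + ttPlus X = ttm X := by ring
    apply continuousOn_if_le
    · -- piece 1
      apply contOn_pod_artanh
      rintro x ⟨hx1, hx2⟩
      have h1 : (((n:ℝ)+2)⁻¹) ≤ x := hx1.1
      have h2 : x ≤ ttm X - ttPlus X := hx2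
      constructor <;> nlinarith
    · -- pieces 2-4
      apply continuousOn_if_le
      · -- piece 2: affine
        apply Continuous.continuousOn
        fun_prop
      · apply continuousOn_if_le
        · apply Continuous.continuousOn
          fun_prop
        · -- piece 4
          apply contOn_pod_artanh
          rintro x ⟨⟨⟨hxw, _⟩, _⟩, hx3⟩
          have h1 : x ≤ 1 - ((n:ℝ)+2)⁻¹ := hxw.2
          have h2 : 1 - (ttc X - ttm X) ≤ x := hx3
          have h3 : 0 ≤ ttm X - ttPlus X := breakpoint1_nonneg X
          rw [breakpoint3_eq] at h2
          rw [breakpoint1_eq] at h3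
          constructor <;> nlinarith
        · -- value match at B3
          have hne : ((1 - (ttc X - ttm X)) - 1/2) ≠ 0 := ne_of_gt hD3
          have harg : (1 - (ttc X - ttm X)) + (ttc X - 1) = ttm X := by
            rw [breakpoint3_eq, ttm_eq]; ring
          rw [harg]
          rw [mul_comm, mul_div_assoc, div_self hne, mul_one, ← podT_eq]
          ring
      · -- value match at 1/2
        have hne : (1/2 - (ttm X - ttPlus X)) ≠ 0 := ne_of_gt hD
        rw [if_pos (half_le_breakpoint3 X)]
        rw [mul_comm, mul_div_assoc, div_self hne, mul_one]
        ring
    · -- value match at B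
      have hcond : (ttm X - ttPlus X) ≤ (1/2:ℝ) := breakpoint1_le_half X
      rw [if_pos hcond, hBm, sub_self, zero_mul, zero_div, add_zero, ← podT_eq]

end CCom
namespace CCom
open Set Filter Topology

/-! ### Limits of Cauchy sequences of paths -/

lemma pow_half_le {K k : ℕ} (h : K ≤ k) : ((2:ℝ)⁻¹)^k ≤ ((2:ℝ)⁻¹)^K :=
  pow_le_pow_of_le_one (by norm_num) (by norm_num) h

lemma key_unif {h : ℕ → PathP} {C : ℝ} (hC : 0 < C)
    (hrate : ∀ k l : ℕ, k ≤ l → dprime (h k) (h l) ≤ C * (2:ℝ)⁻¹^k)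
    (n : ℕ) {ε : ℝ} (hε : 0 < ε) :
    ∃ K : ℕ, ∀ k l, K ≤ k → K ≤ l → ∀ t ∈ Set.Icc (0:ℝ) ((n:ℝ)+1),
      |(h k).f t - (h l).f t| ≤ ε := by
  obtain ⟨K, hK⟩ := exists_pow_lt_of_lt_one
    (show (0:ℝ) < min ε 1 / (2^(n+1) * C) by positivity) (show (2:ℝ)⁻¹ < 1 by norm_num)
  have hmain : ∀ k l, K ≤ k → k ≤ l → supAbs (h k) (h l) n ≤ ε := by
    intro k l hk hkl
    have h1 : dprime (h k) (h l) ≤ C * (2:ℝ)⁻¹^K := by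
      calc dprime (h k) (h l) ≤ C * (2:ℝ)⁻¹^k := hrate k l hkl
        _ ≤ C * (2:ℝ)⁻¹^K := by
            apply mul_le_mul_of_nonneg_left (pow_half_le hk) hC.le
    have hsmall : 2^(n+1) * (C * (2:ℝ)⁻¹^K) < 1 := by
      have h2 : (2:ℝ)⁻¹^K * (2^(n+1) * C) < min ε 1 / (2^(n+1) * C) * (2^(n+1) * C) :=
        mul_lt_mul_of_pos_right hK (by positivity)
      rw [div_mul_cancel₀] at h2
      · have := min_le_right ε 1
        nlinarith
      · positivity
    have := supAbs_le_of_dprime h1 hsmall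
    have h3 : (2:ℝ)^(n+1) * (C * (2:ℝ)⁻¹^K) ≤ ε := by
      have h2 : (2:ℝ)⁻¹^K * (2^(n+1) * C) < min ε 1 / (2^(n+1) * C) * (2^(n+1) * C) :=
        mul_lt_mul_of_pos_right hK (by positivity)
      rw [div_mul_cancel₀] at h2
      · have := min_le_left ε 1
        nlinarith
      · positivity
    linarith
  refine ⟨K, ?_⟩
  intro k l hk hl t ht
  rcases le_total k l with hkl | hkl
  · exact le_trans (abs_le_supAbs ht) (hmain k l hk hkl)
  · rw [abs_sub_comm]
    exact le_trans (abs_le_supAbs ht) (hmain l k hl hkl)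

lemma path_limit {h : ℕ → PathP} {C : ℝ} (hC : 0 < C)
    (hrate : ∀ k l : ℕ, k ≤ l → dprime (h k) (h l) ≤ C * (2:ℝ)⁻¹^k) :
    ∃ ψ : PathP,
      (∀ n : ℕ, ∀ ε > (0:ℝ), ∀ᶠ k in atTop, ∀ t ∈ Set.Icc (0:ℝ) ((n:ℝ)+1),
        |(h k).f t - ψ.f t| ≤ ε)
      ∧ Tendsto (fun k => (h k).t0) atTop (nhds ψ.t0)
      ∧ (∀ s : ℝ, 0 ≤ s → Tendsto (fun k => (h k).f s) atTop (nhds (ψ.f s)))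
      ∧ Tendsto (fun k => dprime (h k) ψ) atTop (nhds 0) := by
  -- limit of starting times
  have ht0cau : CauchySeq (fun k => (h k).t0) := by
    apply cauchySeq_of_le_geometric (r := (2:ℝ)⁻¹) C (by norm_num)
    intro k
    rw [Real.dist_eq]
    exact le_trans (t0_le_dprime _ _) (hrate k (k+1) (Nat.le_succ k))
  obtain ⟨τ, hτ⟩ := cauchySeq_tendsto_of_complete ht0cau
  -- pointwise limits
  have hcau : ∀ s : ℝ, ∃ L : ℝ, Tendsto (fun k => (h k).f (max s 0)) atTop (nhds L) := by
    intro s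
    apply cauchySeq_tendsto_of_complete
    rw [Metric.cauchySeq_iff]
    intro ε hε
    obtain ⟨n, hn⟩ := exists_nat_ge (max s 0)
    obtain ⟨K, hK⟩ := key_unif hC hrate n (half_pos hε)
    refine ⟨K, fun k hk l hl => ?_⟩
    rw [Real.dist_eq]
    have hmem : max s 0 ∈ Set.Icc (0:ℝ) ((n:ℝ)+1) :=
      ⟨le_max_right _ _, by linarith⟩
    calc |(h k).f (max s 0) - (h l).f (max s 0)| ≤ ε/2 := hK k l hk hl _ hmem
      _ < ε := by linarith
  choose φ hφ using hcau
  -- the uniform bound against φ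
  have hunif : ∀ n : ℕ, ∀ ε > (0:ℝ), ∀ᶠ k in atTop, ∀ t ∈ Set.Icc (0:ℝ) ((n:ℝ)+1),
      |(h k).f t - φ t| ≤ ε := by
    intro n ε hε
    obtain ⟨K, hK⟩ := key_unif hC hrate n hε
    rw [eventually_atTop]
    refine ⟨K, fun k hk t ht => ?_⟩
    have hmax : max t 0 = t := max_eq_left ht.1
    have htt : Tendsto (fun l => |(h k).f t - (h l).f t|) atTop
        (nhds |(h k).f t - φ t|) := by
      have h1 : Tendsto (fun l => (h l).f t) atTop (nhds (φ t)) := by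
        have := hφ t; rwa [hmax] at this
      exact ((tendsto_const_nhds.sub h1).abs)
    apply le_of_tendsto htt
    rw [eventually_atTop]
    exact ⟨K, fun l hl => hK k l hk hl t ht⟩
  -- pointwise convergence
  have hpt : ∀ s : ℝ, 0 ≤ s → Tendsto (fun k => (h k).f s) atTop (nhds (φ s)) := by
    intro s hs
    have := hφ s
    rwa [max_eq_left hs] at this
  -- continuity of φ
  have hcont : Continuous φ := by
    rw [continuous_iff_continuousAt]
    intro x
    obtain ⟨n, hn⟩ := exists_nat_ge (|x|)
    have hx : x ∈ Set.Ioo (-((n:ℝ)+1)) ((n:ℝ)+1) := by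
      constructor
      · have := neg_abs_le x; linarith
      · have := le_abs_self x; linarith
    have huc : TendstoUniformlyOn (fun k t => (h k).f (max t 0)) φ atTop
        (Set.Icc (-((n:ℝ)+1)) ((n:ℝ)+1)) := by
      rw [Metric.tendstoUniformlyOn_iff]
      intro ε hε
      filter_upwards [hunif n (ε/2) (half_pos hε)] with k hk t ht
      rw [Real.dist_eq]
      have hmem : max t 0 ∈ Set.Icc (0:ℝ) ((n:ℝ)+1) :=
        ⟨le_max_right _ _, max_le (by linarith [ht.2]) (by positivity)⟩
      have h1 := hk _ hmem
      have h2 : φ (max t 0) = φ t := by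
        rcases le_total t 0 with h3 | h3
        · have hm : max t 0 = 0 := max_eq_right h3
          rw [hm]
          have e1 := hφ t
          rw [hm] at e1
          have e2 := hφ 0
          rw [max_self] at e2
          exact tendsto_nhds_unique e2 e1
        · rw [max_eq_left h3]
      rw [abs_sub_comm] at h1
      calc |φ t - (h k).f (max t 0)| = |φ (max t 0) - (h k).f (max t 0)| := by rw [h2]
        _ ≤ ε/2 := h1
        _ < ε := by linarith
    have hcOn : ContinuousOn φ (Set.Icc (-((n:ℝ)+1)) ((n:ℝ)+1)) := by
      apply huc.continuousOn
      apply Filter.Eventually.frequently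
      filter_upwards with k
      exact ((h k).hf.comp (continuous_id.max continuous_const)).continuousOn
    exact hcOn.continuousAt (Icc_mem_nhds hx.1 hx.2)
  -- starting point facts
  have hτmem : τ ∈ Set.Icc (0:ℝ) 1 :=
    isClosed_Icc.mem_of_tendsto hτ (Filter.Eventually.of_forall (fun k => (h k).ht0))
  have hstart_lim : Tendsto (fun k => (h k).f ((h k).t0)) atTop (nhds (φ τ)) := by
    rw [Metric.tendsto_atTop]
    intro ε hε
    have hφτ : Tendsto (fun k => φ ((h k).t0)) atTop (nhds (φ τ)) :=
      (hcont.continuousAt.tendsto).comp hτ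
    have h1 := hunif 1 (ε/2) (half_pos hε)
    have h2 := (Metric.tendsto_atTop.1 hφτ) (ε/2) (half_pos hε)
    rw [eventually_atTop] at h1
    obtain ⟨K1, hK1⟩ := h1
    obtain ⟨K2, hK2⟩ := h2
    refine ⟨max K1 K2, fun k hk => ?_⟩
    have hmem : (h k).t0 ∈ Set.Icc (0:ℝ) (((1:ℕ):ℝ)+1) := by
      have := (h k).ht0
      constructor
      · exact this.1
      · push_cast; linarith [this.2]
    have ha := hK1 k (le_trans (le_max_left _ _) hk) _ hmem
    have hb := hK2 k (le_trans (le_max_right _ _) hk)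
    rw [Real.dist_eq] at hb ⊢
    calc |(h k).f ((h k).t0) - φ τ|
        ≤ |(h k).f ((h k).t0) - φ ((h k).t0)| + |φ ((h k).t0) - φ τ| := abs_sub_le _ _ _
      _ < ε/2 + ε/2 := by
          apply add_lt_add_of_le_of_lt _ hb
          exact ha
      _ = ε := by ring
  have hconst' : ∀ t ≤ τ, φ t = φ τ := by
    intro t ht
    rcases eq_or_lt_of_le ht with rfl | hlt
    · rfl
    rcases eq_or_lt_of_le hτmem.1 with hτ0 | hτ0
    · -- τ = 0, t < 0
      have ht0 : t ≤ 0 := by linarith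
      have e1 := hφ t
      rw [max_eq_right ht0] at e1
      have e2 := hφ τ
      rw [max_eq_right (le_of_eq hτ0.symm)] at e2
      exact tendsto_nhds_unique e1 e2
    · -- 0 < τ
      have hmax : max t 0 < τ := max_lt hlt hτ0
      have hev : ∀ᶠ k in atTop, max t 0 ≤ (h k).t0 := by
        have := hτ.eventually (eventually_gt_nhds hmax)
        filter_upwards [this] with k hk
        exact hk.le
      have e1 : Tendsto (fun k => (h k).f (max t 0)) atTop (nhds (φ τ)) := by
        apply hstart_lim.congr'
        filter_upwards [hev] with k hk
        exact ((h k).hconst (max t 0) hk).symm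
      exact tendsto_nhds_unique (hφ t) e1
  have hstartmem : φ τ ∈ Set.Icc (-1:ℝ) 1 :=
    isClosed_Icc.mem_of_tendsto hstart_lim (Filter.Eventually.of_forall (fun k => (h k).hstart))
  refine ⟨⟨τ, φ, hτmem, hcont, hconst', hstartmem⟩, hunif, hτ, hpt, ?_⟩
  -- convergence in dprime
  rw [Metric.tendsto_atTop]
  intro ε hε
  obtain ⟨N, hN⟩ := exists_pow_lt_of_lt_one (show (0:ℝ) < ε/2 by linarith)
    (show (2:ℝ)⁻¹ < 1 by norm_num)
  have hsup : ∀ᶠ k in atTop, ∀ n, n ∈ Set.Iio N →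
      supAbs (h k) ⟨τ, φ, hτmem, hcont, hconst', hstartmem⟩ n ≤ ε/2 := by
    rw [Filter.eventually_all_finite (Set.finite_Iio N)]
    intro n hn
    filter_upwards [hunif n (ε/2) (half_pos hε)] with k hk
    exact supAbs_le hk
  obtain ⟨K2, hK2⟩ := (Metric.tendsto_atTop.1 hτ) (ε/2) (half_pos hε)
  rw [eventually_atTop] at hsup
  obtain ⟨K1, hK1⟩ := hsup
  refine ⟨max K1 K2, fun k hk => ?_⟩
  rw [Real.dist_eq, sub_zero, abs_of_nonneg (dprime_nonneg _ _)]
  have ht0k : |(h k).t0 - τ| ≤ ε/2 := by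
    have := hK2 k (le_trans (le_max_right _ _) hk)
    rw [Real.dist_eq] at this
    exact this.le
  have := dprime_le N (by linarith) ht0k
    (fun n hn => hK1 k (le_trans (le_max_left _ _) hk) n hn)
  calc dprime (h k) _ ≤ ε/2 + (2:ℝ)⁻¹^N := this
    _ < ε/2 + ε/2 := by linarith
    _ = ε := by ring

end CCom
namespace CCom
open Set Filter Topology

/-! ### The matching lemma and extraction of a good subsequence -/

lemma dprime_self (γ : PathP) : dprime γ γ = 0 := by
  unfold dprime
  have h1 : ∀ n : ℕ, supAbs γ γ n = 0 := by
    intro n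
    have := IccN_nonempty n
    unfold supAbs
    have h2 : (fun t : Set.Icc (0:ℝ) ((n:ℝ)+1) => |γ.f t - γ.f t|) = fun _ => 0 := by
      funext t; simp
    rw [h2, ciSup_const]
  have h2 : (∑' n : ℕ, (2:ℝ)⁻¹ ^ (n+1) * min (supAbs γ γ n) 1) = 0 := by
    have : ∀ n : ℕ, (2:ℝ)⁻¹ ^ (n+1) * min (supAbs γ γ n) 1 = 0 := by
      intro n; rw [h1 n]; simp
    rw [tsum_congr this, tsum_zero]
  rw [h2, sub_self, abs_zero, max_self]

lemma matching {f1 f2 g1 g2 : PathP} {δ : ℝ}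
    (h1 : min (dprime f1 g1) (dprime f1 g2) ≤ δ)
    (h2 : min (dprime f2 g1) (dprime f2 g2) ≤ δ)
    (h3 : min (dprime g1 f1) (dprime g1 f2) ≤ δ)
    (h4 : min (dprime g2 f1) (dprime g2 f2) ≤ δ) :
    ∃ b : Bool, dprime f1 (if b then g2 else g1) ≤ 3*δ ∧
      dprime f2 (if b then g1 else g2) ≤ 3*δ := by
  have hδ : 0 ≤ δ := le_trans (le_min (dprime_nonneg _ _) (dprime_nonneg _ _)) h1
  rcases le_or_gt (dprime f1 g1) δ with hA | hA
  · rcases le_or_gt (dprime f2 g2) δ with hB | hB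
    · exact ⟨false, by simpa using le_trans hA (by linarith), by simpa using le_trans hB (by linarith)⟩
    · have h21 : dprime f2 g1 ≤ δ := by
        rcases min_le_iff.1 h2 with h | h
        · exact h
        · linarith
      have h41 : dprime g2 f1 ≤ δ := by
        rcases min_le_iff.1 h4 with h | h
        · exact h
        · rw [dprime_symm] at h; linarith
      refine ⟨false, by simpa using le_trans hA (by linarith), ?_⟩
      simp only [if_neg Bool.false_ne_true]
      calc dprime f2 g2 ≤ dprime f2 g1 + dprime g1 g2 := dprime_triangle _ _ _
        _ ≤ dprime f2 g1 + (dprime g1 f1 + dprime f1 g2) := by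
            linarith [dprime_triangle g1 f1 g2]
        _ ≤ δ + (δ + δ) := by
            apply add_le_add h21
            apply add_le_add _ (by rw [dprime_symm]; exact h41)
            rw [dprime_symm]; exact hA
        _ = 3*δ := by ring
  · have h12 : dprime f1 g2 ≤ δ := by
      rcases min_le_iff.1 h1 with h | h
      · linarith
      · exact h
    rcases le_or_gt (dprime f2 g1) δ with hB | hB
    · exact ⟨true, by simpa using le_trans h12 (by linarith), by simpa using le_trans hB (by linarith)⟩
    · exfalso
      rcases min_le_iff.1 h3 with h | h
      · rw [dprime_symm] at h; linarith
      · rw [dprime_symm] at h; linarith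

lemma exists_strictMono_in {s : Set ℕ} (hs : s.Infinite) :
    ∃ f : ℕ → ℕ, StrictMono f ∧ ∀ n, f n ∈ s := by
  have hgt : ∀ a : ℕ, ∃ b, b ∈ s ∧ a < b := by
    intro a
    obtain ⟨b, hb1, hb2⟩ := hs.exists_gt a
    exact ⟨b, hb1, hb2⟩
  choose g hg1 hg2 using hgt
  refine ⟨fun n => Nat.rec (g 0) (fun _ prev => g prev) n, ?_, ?_⟩
  · apply strictMono_nat_of_lt_succ
    intro n
    exact hg2 _
  · intro n
    cases n with
    | zero => exact hg1 0
    | succ m => exact hg1 _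

/-- The two ordered paths of `X`, in orientation `b`. -/
def pick (X : CoalPair) (b : Bool) : PathP × PathP :=
  if b then (X.p2, X.p1) else (X.p1, X.p2)

lemma exists_good_subseq (F : ℕ → CoalPair)
    (hC : ∀ ε > (0:ℝ), ∃ N : ℕ, ∀ m ≥ N, ∀ n ≥ N, dtilde (F m) (F n) < ε) :
    ∃ μ : ℕ → ℕ, StrictMono μ ∧
      (∀ k, ∀ i ≥ μ k, ∀ j ≥ μ k, dtilde (F i) (F j) < (2:ℝ)⁻¹^k) ∧
      (∀ k l, k ≤ l → dprime (F (μ k)).p1 (F (μ l)).p1 ≤ 6 * (2:ℝ)⁻¹^k) ∧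
      (∀ k l, k ≤ l → dprime (F (μ k)).p2 (F (μ l)).p2 ≤ 6 * (2:ℝ)⁻¹^k) := by
  have hC' : ∀ k : ℕ, ∃ N : ℕ, ∀ m ≥ N, ∀ n ≥ N, dtilde (F m) (F n) < (2:ℝ)⁻¹^k :=
    fun k => hC ((2:ℝ)⁻¹^k) (by positivity)
  choose N' hN' using hC'
  -- strictly monotone sequence of indices
  set M : ℕ → ℕ := fun k => Nat.rec (N' 0) (fun k prev => max (N' (k+1)) (prev + 1)) k with hM
  have hMsucc : ∀ k, M (k+1) = max (N' (k+1)) (M k + 1) := fun k => rfl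
  have hMmono : StrictMono M := by
    apply strictMono_nat_of_lt_succ
    intro k
    rw [hMsucc]
    exact lt_of_lt_of_le (Nat.lt_succ_self _) (le_max_right _ _)
  have hMN : ∀ k, N' k ≤ M k := by
    intro k
    cases k with
    | zero => exact le_refl _
    | succ m => rw [hMsucc]; exact le_max_left _ _
  have hP1 : ∀ k, ∀ i ≥ M k, ∀ j ≥ M k, dtilde (F i) (F j) < (2:ℝ)⁻¹^k := by
    intro k i hi j hj
    exact hN' k i (le_trans (hMN k) hi) j (le_trans (hMN k) hj)
  -- the matching at each step
  have match_ex : ∀ (k : ℕ) (b : Bool), ∃ b' : Bool,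
      dprime (pick (F (M k)) b).1 (pick (F (M (k+1))) b').1 ≤ 3 * (2:ℝ)⁻¹^k ∧
      dprime (pick (F (M k)) b).2 (pick (F (M (k+1))) b').2 ≤ 3 * (2:ℝ)⁻¹^k := by
    intro k b
    set X := F (M k); set Y := F (M (k+1))
    have hd1 : dbar X Y ≤ (2:ℝ)⁻¹^k := by
      apply le_trans (dbar_le_dtilde X Y)
      apply le_of_lt
      exact hP1 k _ (le_refl _) _ (hMmono (Nat.lt_succ_self k)).le
    have hd2 : dbar Y X ≤ (2:ℝ)⁻¹^k := by
      apply le_trans (dbar_le_dtilde Y X)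
      apply le_of_lt
      exact hP1 k _ (hMmono (Nat.lt_succ_self k)).le _ (le_refl _)
    have hb11 : min (dprime X.p1 Y.p1) (dprime X.p1 Y.p2) ≤ (2:ℝ)⁻¹^k :=
      le_trans (le_max_left _ _) hd1
    have hb12 : min (dprime X.p2 Y.p1) (dprime X.p2 Y.p2) ≤ (2:ℝ)⁻¹^k :=
      le_trans (le_max_right _ _) hd1
    have hb21 : min (dprime Y.p1 X.p1) (dprime Y.p1 X.p2) ≤ (2:ℝ)⁻¹^k :=
      le_trans (le_max_left _ _) hd2
    have hb22 : min (dprime Y.p2 X.p1) (dprime Y.p2 X.p2) ≤ (2:ℝ)⁻¹^k :=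
      le_trans (le_max_right _ _) hd2
    cases b with
    | false =>
      obtain ⟨b', hb'1, hb'2⟩ := matching hb11 hb12 hb21 hb22
      refine ⟨b', ?_, ?_⟩
      · cases b' with
        | false => simpa [pick] using hb'1
        | true => simpa [pick] using hb'1
      · cases b' with
        | false => simpa [pick] using hb'2
        | true => simpa [pick] using hb'2
    | true =>
      obtain ⟨b', hb'1, hb'2⟩ := matching hb12 hb11
        (by rw [min_comm] at hb21; exact hb21) (by rw [min_comm] at hb22; exact hb22)
      refine ⟨b', ?_, ?_⟩
      · cases b' with
        | false => simpa [pick] using hb'1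
        | true => simpa [pick] using hb'1
      · cases b' with
        | false => simpa [pick] using hb'2
        | true => simpa [pick] using hb'2
  -- the orientations
  set σ : ℕ → Bool := fun k => Nat.rec false (fun k b => Classical.choose (match_ex k b)) k
    with hσ
  have hσsucc : ∀ k, σ (k+1) = Classical.choose (match_ex k (σ k)) := fun k => rfl
  set q1 : ℕ → PathP := fun k => (pick (F (M k)) (σ k)).1 with hq1
  set q2 : ℕ → PathP := fun k => (pick (F (M k)) (σ k)).2 with hq2
  have hstep : ∀ k, dprime (q1 k) (q1 (k+1)) ≤ 3 * (2:ℝ)⁻¹^k ∧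
      dprime (q2 k) (q2 (k+1)) ≤ 3 * (2:ℝ)⁻¹^k := by
    intro k
    have := Classical.choose_spec (match_ex k (σ k))
    rw [hq1, hq2]
    simp only
    rw [← hσsucc k] at this
    exact this
  -- geometric rate along the chain
  have hrate : ∀ q : ℕ → PathP, (∀ k, dprime (q k) (q (k+1)) ≤ 3 * (2:ℝ)⁻¹^k) →
      ∀ j l, j ≤ l → dprime (q j) (q l) ≤ 6 * (2:ℝ)⁻¹^j := by
    intro q hq j l hjl
    have key : ∀ l, j ≤ l → dprime (q j) (q l) ≤ 6 * ((2:ℝ)⁻¹^j - (2:ℝ)⁻¹^l) := by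
      intro l hl
      induction l with
      | zero =>
        have : j = 0 := Nat.le_zero.1 hl
        subst this
        rw [dprime_self]
        simp
      | succ m ih =>
        rcases Nat.lt_or_ge j (m+1) with h | h
        · have hjm : j ≤ m := Nat.lt_succ_iff.1 h
          have h1 := ih hjm
          have h2 := hq m
          calc dprime (q j) (q (m+1)) ≤ dprime (q j) (q m) + dprime (q m) (q (m+1)) :=
                dprime_triangle _ _ _
            _ ≤ 6 * ((2:ℝ)⁻¹^j - (2:ℝ)⁻¹^m) + 3 * (2:ℝ)⁻¹^m := add_le_add h1 h2
            _ = 6 * ((2:ℝ)⁻¹^j - (2:ℝ)⁻¹^(m+1)) := by rw [pow_succ]; ring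
        · have : j = m + 1 := le_antisymm hl h
          subst this
          rw [dprime_self]
          simp
    calc dprime (q j) (q l) ≤ 6 * ((2:ℝ)⁻¹^j - (2:ℝ)⁻¹^l) := key l hjl
      _ ≤ 6 * (2:ℝ)⁻¹^j := by
          have : (0:ℝ) ≤ (2:ℝ)⁻¹^l := by positivity
          linarith
  have hrate1 := hrate q1 (fun k => (hstep k).1)
  have hrate2 := hrate q2 (fun k => (hstep k).2)
  -- stabilize the orientation
  have hpigeon : {k | σ k = false}.Infinite ∨ {k | σ k = true}.Infinite := by
    by_contra hcon
    push_neg at hcon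
    have : (Set.univ : Set ℕ).Finite := by
      have hu : (Set.univ : Set ℕ) = {k | σ k = false} ∪ {k | σ k = true} := by
        ext k; simp only [Set.mem_univ, Set.mem_union, Set.mem_setOf_eq, true_iff]
        cases hσk : σ k
        · exact Or.inl rfl
        · exact Or.inr rfl
      rw [hu]
      exact hcon.1.union hcon.2
    exact Set.infinite_univ this
  obtain ⟨b0, hb0⟩ : ∃ b0 : Bool, {k | σ k = b0}.Infinite := by
    rcases hpigeon with h | h
    · exact ⟨false, h⟩
    · exact ⟨true, h⟩
  obtain ⟨e, hemono, hemem⟩ := exists_strictMono_in hb0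
  refine ⟨fun k => M (e k), hMmono.comp hemono, ?_, ?_, ?_⟩
  · intro k i hi j hj
    have hek : M k ≤ M (e k) := hMmono.monotone (hemono.le_apply)
    exact hP1 k i (le_trans hek hi) j (le_trans hek hj)
  · intro k l hkl
    have he : σ (e k) = b0 := hemem k
    have he' : σ (e l) = b0 := hemem l
    have hekl : e k ≤ e l := hemono.monotone hkl
    have hq : dprime (q1 (e k)) (q1 (e l)) ≤ 6 * (2:ℝ)⁻¹^(e k) := hrate1 _ _ hekl
    have hq' : dprime (q2 (e k)) (q2 (e l)) ≤ 6 * (2:ℝ)⁻¹^(e k) := hrate2 _ _ hekl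
    have hbound : (6:ℝ) * (2:ℝ)⁻¹^(e k) ≤ 6 * (2:ℝ)⁻¹^k := by
      have := pow_half_le (show k ≤ e k from hemono.le_apply)
      linarith
    cases b0 with
    | false =>
      have : (F (M (e k))).p1 = q1 (e k) := by rw [hq1]; simp only [pick, he]; rfl
      have h2 : (F (M (e l))).p1 = q1 (e l) := by rw [hq1]; simp only [pick, he']; rfl
      rw [this, h2]
      linarith
    | true =>
      have : (F (M (e k))).p1 = q2 (e k) := by rw [hq2]; simp only [pick, he]; rfl
      have h2 : (F (M (e l))).p1 = q2 (e l) := by rw [hq2]; simp only [pick, he']; rfl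
      rw [this, h2]
      linarith
  · intro k l hkl
    have he : σ (e k) = b0 := hemem k
    have he' : σ (e l) = b0 := hemem l
    have hekl : e k ≤ e l := hemono.monotone hkl
    have hq : dprime (q1 (e k)) (q1 (e l)) ≤ 6 * (2:ℝ)⁻¹^(e k) := hrate1 _ _ hekl
    have hq' : dprime (q2 (e k)) (q2 (e l)) ≤ 6 * (2:ℝ)⁻¹^(e k) := hrate2 _ _ hekl
    have hbound : (6:ℝ) * (2:ℝ)⁻¹^(e k) ≤ 6 * (2:ℝ)⁻¹^k := by
      have := pow_half_le (show k ≤ e k from hemono.le_apply)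
      linarith
    cases b0 with
    | false =>
      have : (F (M (e k))).p2 = q2 (e k) := by rw [hq2]; simp only [pick, he]; rfl
      have h2 : (F (M (e l))).p2 = q2 (e l) := by rw [hq2]; simp only [pick, he']; rfl
      rw [this, h2]
      linarith
    | true =>
      have : (F (M (e k))).p2 = q1 (e k) := by rw [hq1]; simp only [pick, he]; rfl
      have h2 : (F (M (e l))).p2 = q1 (e l) := by rw [hq1]; simp only [pick, he']; rfl
      rw [this, h2]
      linarith

end CCom
namespace CCom
open Set Filter Topology

/-! ### The analytic context for the limit -/

/-- Bundled data of the converging subsequence and its limit paths. -/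
structure LimCtx where
  H : ℕ → CoalPair
  A : PathP
  B : PathP
  hd : ∀ k l : ℕ, k ≤ l → Delta (stdPod (H k)) (stdPod (H l)) ≤ (2:ℝ)⁻¹^k
  hAu : ∀ n : ℕ, ∀ ε > (0:ℝ), ∀ᶠ k in atTop, ∀ t ∈ Set.Icc (0:ℝ) ((n:ℝ)+1),
    |(H k).p1.f t - A.f t| ≤ ε
  hBu : ∀ n : ℕ, ∀ ε > (0:ℝ), ∀ᶠ k in atTop, ∀ t ∈ Set.Icc (0:ℝ) ((n:ℝ)+1),
    |(H k).p2.f t - B.f t| ≤ ε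
  hAt0 : Filter.Tendsto (fun k => (H k).p1.t0) Filter.atTop (nhds A.t0)
  hBt0 : Filter.Tendsto (fun k => (H k).p2.t0) Filter.atTop (nhds B.t0)

namespace LimCtx

variable (c : LimCtx)

/-- The limit pod. -/
def podL (t : ℝ) : ℝ := c.B.f t - c.A.f t

lemma podL_continuous : Continuous c.podL := c.B.hf.sub c.A.hf

/-- tanh of the limit `t⁺`. -/
noncomputable def aL : ℝ := Real.tanh (max c.A.t0 c.B.t0)

lemma aL_nonneg : 0 ≤ c.aL := tanh_nonneg (le_max_of_le_left c.A.ht0.1)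

lemma aL_lt_one : c.aL < 1 := tanh_lt_one _

lemma tPlus_tendsto : Tendsto (fun k => tPlus (c.H k)) atTop (nhds (max c.A.t0 c.B.t0)) :=
  c.hAt0.max c.hBt0

lemma ttPlus_tendsto : Tendsto (fun k => ttPlus (c.H k)) atTop (nhds c.aL) :=
  (continuous_tanh.continuousAt.tendsto).comp c.tPlus_tendsto

lemma ttm_tendsto_aux {γ : ℝ} {r : ℕ → ℕ} (hr : Tendsto r atTop atTop)
    (hc : Tendsto (fun j => ttc (c.H (r j))) atTop (nhds γ)) :
    Tendsto (fun j => ttm (c.H (r j))) atTop (nhds ((c.aL + γ)/2)) := by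
  have h1 : Tendsto (fun j => ttPlus (c.H (r j))) atTop (nhds c.aL) :=
    c.ttPlus_tendsto.comp hr
  have := (h1.add hc).div_const 2
  simpa [ttm_eq] using this

/-- Moving-time convergence of the pods. -/
lemma pod_move {r : ℕ → ℕ} (hr : Tendsto r atTop atTop)
    {s : ℕ → ℝ} {sl : ℝ} (hs : Tendsto s atTop (nhds sl)) (hs0 : ∀ᶠ j in atTop, 0 ≤ s j) :
    Tendsto (fun j => pod (c.H (r j)) (s j)) atTop (nhds (c.podL sl)) := by
  have hsl0 : 0 ≤ sl := ge_of_tendsto hs hs0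
  rw [Metric.tendsto_atTop]
  intro ε hε
  obtain ⟨n, hn⟩ := exists_nat_ge sl
  -- eventually s j ≤ n + 1
  have hev1 : ∀ᶠ j in atTop, s j ∈ Set.Icc (0:ℝ) ((n:ℝ)+1) := by
    have : ∀ᶠ j in atTop, s j < (n:ℝ)+1 :=
      hs.eventually (eventually_lt_nhds (by linarith : sl < (n:ℝ)+1))
    filter_upwards [this, hs0] with j hj hj0
    exact ⟨hj0, hj.le⟩
  have hev2 : ∀ᶠ k in atTop, ∀ t ∈ Set.Icc (0:ℝ) ((n:ℝ)+1),
      |(c.H k).p1.f t - c.A.f t| ≤ ε/4 := c.hAu n (ε/4) (by linarith)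
  have hev3 : ∀ᶠ k in atTop, ∀ t ∈ Set.Icc (0:ℝ) ((n:ℝ)+1),
      |(c.H k).p2.f t - c.B.f t| ≤ ε/4 := c.hBu n (ε/4) (by linarith)
  have hev4 : ∀ᶠ j in atTop, |c.podL (s j) - c.podL sl| < ε/4 := by
    have hcont : Tendsto (fun j => c.podL (s j)) atTop (nhds (c.podL sl)) :=
      (c.podL_continuous.continuousAt.tendsto).comp hs
    have := (Metric.tendsto_atTop.1 hcont) (ε/4) (by linarith)
    obtain ⟨N, hN⟩ := this
    rw [eventually_atTop]
    exact ⟨N, fun j hj => by have := hN j hj; rwa [Real.dist_eq] at this⟩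
  rw [eventually_atTop] at hev1 hev4
  obtain ⟨N1, hN1⟩ := hev1
  obtain ⟨N4, hN4⟩ := hev4
  have hev23 : ∀ᶠ j in atTop, (∀ t ∈ Set.Icc (0:ℝ) ((n:ℝ)+1),
      |(c.H (r j)).p1.f t - c.A.f t| ≤ ε/4) ∧ (∀ t ∈ Set.Icc (0:ℝ) ((n:ℝ)+1),
      |(c.H (r j)).p2.f t - c.B.f t| ≤ ε/4) := hr.eventually (hev2.and hev3)
  rw [eventually_atTop] at hev23
  obtain ⟨N2, hN2⟩ := hev23
  refine ⟨max (max N1 N4) N2, fun j hj => ?_⟩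
  have h1 := hN1 j (le_trans (le_trans (le_max_left _ _) (le_max_left _ _)) hj)
  have h4 := hN4 j (le_trans (le_trans (le_max_right _ _) (le_max_left _ _)) hj)
  have h2 := (hN2 j (le_trans (le_max_right _ _) hj)).1 _ h1
  have h3 := (hN2 j (le_trans (le_max_right _ _) hj)).2 _ h1
  rw [Real.dist_eq]
  have hexp : pod (c.H (r j)) (s j) - c.podL sl
      = ((c.H (r j)).p2.f (s j) - c.B.f (s j)) - ((c.H (r j)).p1.f (s j) - c.A.f (s j))
        + (c.podL (s j) - c.podL sl) := by
    unfold pod podL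
    ring
  rw [hexp]
  have := abs_add_le (((c.H (r j)).p2.f (s j) - c.B.f (s j)) - ((c.H (r j)).p1.f (s j) - c.A.f (s j)))
    (c.podL (s j) - c.podL sl)
  have h5 := abs_sub ((c.H (r j)).p2.f (s j) - c.B.f (s j)) ((c.H (r j)).p1.f (s j) - c.A.f (s j))
  calc |_| ≤ _ := this
    _ < ε := by
      have := abs_sub_abs_le_abs_sub ((c.H (r j)).p2.f (s j) - c.B.f (s j))
        ((c.H (r j)).p1.f (s j) - c.A.f (s j))
      calc |(c.H (r j)).p2.f (s j) - c.B.f (s j) - ((c.H (r j)).p1.f (s j) - c.A.f (s j))|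
            + |c.podL (s j) - c.podL sl|
          ≤ (|(c.H (r j)).p2.f (s j) - c.B.f (s j)| + |(c.H (r j)).p1.f (s j) - c.A.f (s j)|)
            + |c.podL (s j) - c.podL sl| := by
            have := abs_sub ((c.H (r j)).p2.f (s j) - c.B.f (s j))
              ((c.H (r j)).p1.f (s j) - c.A.f (s j))
            linarith
        _ < ε/4 + ε/4 + ε/4 := by
            apply add_lt_add_of_le_of_lt (add_le_add h3 h2) h4
        _ < ε := by linarith

end LimCtx
end CCom
namespace CCom
open Set Filter Topology

lemma artanh_nonneg {y : ℝ} (h0 : 0 ≤ y) (h1 : y < 1) : 0 ≤ artanh y := by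
  unfold artanh
  have h2 : (1:ℝ) ≤ (1 + y) / (1 - y) := by
    rw [le_div_iff₀ (by linarith)]
    linarith
  have := Real.log_nonneg h2
  linarith

lemma invPod_contOn (X : CoalPair) (n : ℕ) :
    ContinuousOn (fun x => 1 / stdPod X x) (Wind n) := by
  apply ContinuousOn.div continuousOn_const (stdPod_contOn X n)
  intro x hx
  exact (stdPod_pos X (Wind_subset n hx).1 (Wind_subset n hx).2).ne'

lemma DSup_bddAbove (X Y : CoalPair) (n : ℕ) :
    BddAbove (Set.range fun x : Wind n => |1 / stdPod X x - 1 / stdPod Y x|) := by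
  have hc : ContinuousOn (fun x : ℝ => |1/stdPod X x - 1/stdPod Y x|) (Wind n) :=
    ((invPod_contOn X n).sub (invPod_contOn Y n)).abs
  have hcpt : IsCompact (Wind n) := isCompact_Icc
  have := hcpt.bddAbove_image hc
  rwa [Set.image_eq_range] at this

lemma window_bound {X Y : CoalPair} {n : ℕ} {δ : ℝ}
    (hδ : Delta (stdPod X) (stdPod Y) ≤ δ) (hsmall : 2^(n+2) * δ < 1)
    {x : ℝ} (hx : x ∈ Wind n) :
    |1 / stdPod X x - 1 / stdPod Y x| ≤ 2^(n+2) * δ :=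
  le_trans (abs_le_DSup (DSup_bddAbove X Y n) hx) (DSup_le_of_Delta hδ hsmall)

lemma small_help {n j : ℕ} (h : n + 3 ≤ j) : (2:ℝ)^(n+2) * (2:ℝ)⁻¹^j < 1 := by
  calc (2:ℝ)^(n+2) * (2:ℝ)⁻¹^j ≤ (2:ℝ)^(n+2) * (2:ℝ)⁻¹^(n+3) := by
        apply mul_le_mul_of_nonneg_left (pow_half_le h) (by positivity)
    _ = ((2:ℝ) * 2⁻¹)^(n+2) * 2⁻¹ := by rw [mul_pow, pow_succ]; ring
    _ = 2⁻¹ := by norm_num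
    _ < 1 := by norm_num

namespace LimCtx

variable (c : LimCtx)

lemma wb {n j l : ℕ} (hj : n + 3 ≤ j) (hjl : j ≤ l) {x : ℝ} (hx : x ∈ Wind n) :
    |1 / stdPod (c.H j) x - 1 / stdPod (c.H l) x| ≤ 2^(n+2) * (2:ℝ)⁻¹^j :=
  window_bound (c.hd j l hjl) (small_help hj) hx

/-- Uniform positive lower bound for the standard pods on a window. -/
lemma winLB (n : ℕ) : ∃ K : ℝ, 0 < K ∧ ∀ j, n + 3 ≤ j → ∀ x ∈ Wind n,
    1 / stdPod (c.H j) x ≤ K ∧ 1/K ≤ stdPod (c.H j) x := by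
  obtain ⟨C0, hC0⟩ := (isCompact_Icc (a := (((n:ℝ)+2)⁻¹)) (b := 1 - ((n:ℝ)+2)⁻¹)).exists_bound_of_continuousOn (invPod_contOn (c.H (n+3)) n)
  have hC00 : 0 ≤ C0 := by
    obtain ⟨x0⟩ := Wind_nonempty n
    exact le_trans (norm_nonneg _) (hC0 x0 x0.2)
  refine ⟨C0 + 1, by linarith, ?_⟩
  intro j hj x hx
  have hpos : 0 < stdPod (c.H j) x :=
    stdPod_pos _ (Wind_subset n hx).1 (Wind_subset n hx).2
  have hb : 1 / stdPod (c.H j) x ≤ C0 + 1 := by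
    have h1 : |1 / stdPod (c.H (n+3)) x - 1 / stdPod (c.H j) x| ≤ 2^(n+2) * (2:ℝ)⁻¹^(n+3) :=
      c.wb (le_refl _) hj hx
    have h2 : (2:ℝ)^(n+2) * (2:ℝ)⁻¹^(n+3) ≤ 1 := by
      have : ((2:ℝ) * 2⁻¹)^(n+2) * 2⁻¹ = (2:ℝ)^(n+2) * (2:ℝ)⁻¹^(n+3) := by
        rw [mul_pow, pow_succ]; ring
      rw [← this]
      norm_num
    have h3 := hC0 x hx
    rw [Real.norm_eq_abs] at h3
    have h4 := abs_le.1 h1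
    have h5 := abs_le.1 h3
    linarith [h4.1, h4.2, h5.1, h5.2]
  refine ⟨hb, ?_⟩
  rw [div_le_iff₀ hpos] at hb
  rw [div_le_iff₀ (by linarith : (0:ℝ) < C0 + 1)]
  nlinarith

lemma pod_pt {t : ℝ} (ht : 0 ≤ t) :
    Tendsto (fun k => pod (c.H k) t) atTop (nhds (c.podL t)) :=
  c.pod_move tendsto_id (tendsto_const_nhds) (Filter.Eventually.of_forall (fun _ => ht))

lemma ttc_nonneg (X : CoalPair) : 0 ≤ ttc X :=
  le_trans (ttPlus_nonneg X) (ttPlus_le_ttc X)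

/-- LP-A : beyond any coalescence limit point, the limit pod vanishes. -/
lemma lpA {r : ℕ → ℕ} (hr : Tendsto r atTop atTop) {γ : ℝ}
    (hγ : Tendsto (fun j => ttc (c.H (r j))) atTop (nhds γ)) (hγ1 : γ < 1)
    {t : ℝ} (ht : γ < Real.tanh t) : c.podL t = 0 := by
  have hγ0 : 0 ≤ γ :=
    ge_of_tendsto hγ (Filter.Eventually.of_forall (fun j => ttc_nonneg _))
  have ht0 : 0 ≤ t := by
    by_contra hcon
    push_neg at hcon
    have := tanh_strictMono hcon
    rw [Real.tanh_zero] at this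
    linarith
  have hev : ∀ᶠ j in atTop, pod (c.H (r j)) t = 0 := by
    filter_upwards [hγ.eventually (eventually_lt_nhds ht)] with j hj
    have hfin : tcFinite (c.H (r j)) := by
      by_contra hF
      rw [ttc_eq_one hF] at hj
      linarith [tanh_lt_one t]
    apply pod_zero_after hfin
    have : Real.tanh (tcReal (c.H (r j))) < Real.tanh t := by
      have he : ttc (c.H (r j)) = Real.tanh (tcReal (c.H (r j))) := by
        unfold ttc; rw [if_pos hfin]
      rw [← he]; exact hj
    exact (tanh_strictMono.lt_iff_lt.1 this).le
  have hlim := c.pod_move hr (s := fun _ => t) tendsto_const_nhds (Filter.Eventually.of_forall (fun _ => ht0))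
  have h0 : Tendsto (fun j => pod (c.H (r j)) t) atTop (nhds 0) := by
    have heq : (fun _ : ℕ => (0:ℝ)) =ᶠ[atTop] fun j => pod (c.H (r j)) t := by
      filter_upwards [hev] with j hj
      exact hj.symm
    exact Tendsto.congr' heq tendsto_const_nhds
  exact (tendsto_nhds_unique hlim h0)

/-- LP-B : strictly inside the limiting pod interval, the limit pod is positive. -/
lemma lpB {r : ℕ → ℕ} (hr : Tendsto r atTop atTop) {γ : ℝ}
    (hγ : Tendsto (fun j => ttc (c.H (r j))) atTop (nhds γ))
    {t : ℝ} (ht1 : c.aL < Real.tanh t) (ht2 : Real.tanh t < γ) : 0 < c.podL t := by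
  have haL0 := c.aL_nonneg
  have hγ1 : γ ≤ 1 :=
    le_of_tendsto hγ (Filter.Eventually.of_forall (fun j => ttc_le_one _))
  have hy1 : Real.tanh t < 1 := tanh_lt_one t
  have ht0 : 0 ≤ t := by
    by_contra hcon
    push_neg at hcon
    have := tanh_strictMono hcon
    rw [Real.tanh_zero] at this
    linarith
  have hty : artanh (Real.tanh t) = t := artanh_tanh t
  have hmm := c.ttm_tendsto_aux hr hγ
  have haγ : c.aL < γ := lt_trans ht1 ht2
  -- In each of the three cases we produce a moving point xx with the right limit,
  -- where the standard pod equals the pod at a (moving) time whose limit is `t`.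
  have main : ∃ (xx : ℕ → ℝ) (xl : ℝ) (ss : ℕ → ℝ), xl ∈ Set.Ioo (0:ℝ) 1 ∧
      Tendsto xx atTop (nhds xl) ∧ (∀ᶠ j in atTop, 0 ≤ ss j) ∧
      Tendsto ss atTop (nhds t) ∧
      (∀ᶠ j in atTop, stdPod (c.H (r j)) (xx j) = pod (c.H (r j)) (ss j)) := by
    rcases lt_trichotomy (Real.tanh t) ((c.aL + γ)/2) with hy | hy | hy
    · -- left of the middle : piece 1 with constant time t
      refine ⟨fun j => Real.tanh t - ttPlus (c.H (r j)), Real.tanh t - c.aL, fun _ => t,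
        ⟨by linarith, by linarith⟩,
        (tendsto_const_nhds.sub (c.ttPlus_tendsto.comp hr)),
        Filter.Eventually.of_forall (fun _ => ht0),
        tendsto_const_nhds, ?_⟩
      filter_upwards [hmm.eventually (eventually_gt_nhds hy)] with j hj
      have hcond : Real.tanh t - ttPlus (c.H (r j)) ≤ ttm (c.H (r j)) - ttPlus (c.H (r j)) := by
        linarith
      rw [stdPod_p1 _ hcond]
      have : Real.tanh t - ttPlus (c.H (r j)) + ttPlus (c.H (r j)) = Real.tanh t := by ring
      rw [this, hty]
    · -- exactly the middle : moving time artanh (ttm)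
      refine ⟨fun j => ttm (c.H (r j)) - ttPlus (c.H (r j)), (c.aL + γ)/2 - c.aL,
        fun j => artanh (ttm (c.H (r j))),
        ⟨by linarith, by linarith⟩,
        (hmm.sub (c.ttPlus_tendsto.comp hr)),
        Filter.Eventually.of_forall (fun j => artanh_nonneg (ttm_nonneg _) (ttm_lt_one _)), ?_, ?_⟩
      · have hart : ContinuousAt artanh ((c.aL + γ)/2) := by
          apply continuousAt_artanh
          · linarith
          · linarith
        have := (hart.tendsto).comp hmm
        rw [← hy] at this
        rwa [hty] at this
      · apply Filter.Eventually.of_forall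
        intro j
        rw [stdPod_p1 _ (le_refl _)]
        congr 2
        ring
    · -- right of the middle : piece 4 with constant time t
      refine ⟨fun j => Real.tanh t + 1 - ttc (c.H (r j)), Real.tanh t + 1 - γ, fun _ => t,
        ⟨by linarith, by linarith⟩,
        (tendsto_const_nhds.sub hγ),
        Filter.Eventually.of_forall (fun _ => ht0), tendsto_const_nhds, ?_⟩
      filter_upwards [hmm.eventually (eventually_lt_nhds hy)] with j hj
      have hcond : ¬ (Real.tanh t + 1 - ttc (c.H (r j)) ≤ 1 - (ttc (c.H (r j)) - ttm (c.H (r j)))) := by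
        push_neg
        linarith
      rw [stdPod_p4 _ hcond]
      have : Real.tanh t + 1 - ttc (c.H (r j)) - (1 - ttc (c.H (r j))) = Real.tanh t := by ring
      rw [this, hty]
  obtain ⟨xx, xl, ss, hxl, hxx, hss0, hsst, hpiece⟩ := main
  -- the window capturing the limit point
  obtain ⟨n, hn1, hn2⟩ := exists_Wind xl hxl
  obtain ⟨K, hK0, hK⟩ := c.winLB n
  have hevW : ∀ᶠ j in atTop, xx j ∈ Wind n := by
    filter_upwards [hxx.eventually (eventually_gt_nhds hn1),
      hxx.eventually (eventually_lt_nhds hn2)] with j h1 h2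
    exact ⟨h1.le, h2.le⟩
  have hevr : ∀ᶠ j in atTop, n + 3 ≤ r j := hr.eventually (eventually_ge_atTop (n+3))
  have hlow : ∀ᶠ j in atTop, 1/K ≤ pod (c.H (r j)) (ss j) := by
    filter_upwards [hevW, hevr, hpiece] with j h1 h2 h3
    rw [← h3]
    exact (hK (r j) h2 (xx j) h1).2
  have hlim := c.pod_move hr hsst hss0
  have := ge_of_tendsto hlim hlow
  have hKpos : 0 < 1/K := by positivity
  linarith

end LimCtx
end CCom
namespace CCom
open Set Filter Topology
namespace LimCtx

variable (c : LimCtx)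

lemma aL_le_of_limpt {r : ℕ → ℕ} (hr : Tendsto r atTop atTop) {γ : ℝ}
    (hγ : Tendsto (fun j => ttc (c.H (r j))) atTop (nhds γ)) : c.aL ≤ γ := by
  have h1 : Tendsto (fun j => ttPlus (c.H (r j))) atTop (nhds c.aL) :=
    c.ttPlus_tendsto.comp hr
  exact le_of_tendsto_of_tendsto' h1 hγ (fun j => ttPlus_le_ttc _)

lemma limpt_unique {r1 r2 : ℕ → ℕ} (hr1 : Tendsto r1 atTop atTop)
    (hr2 : Tendsto r2 atTop atTop) {γ1 γ2 : ℝ}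
    (hγ1 : Tendsto (fun j => ttc (c.H (r1 j))) atTop (nhds γ1))
    (hγ2 : Tendsto (fun j => ttc (c.H (r2 j))) atTop (nhds γ2)) : γ1 = γ2 := by
  have key : ∀ (s1 s2 : ℕ → ℕ), Tendsto s1 atTop atTop → Tendsto s2 atTop atTop →
      ∀ δ1 δ2 : ℝ, Tendsto (fun j => ttc (c.H (s1 j))) atTop (nhds δ1) →
      Tendsto (fun j => ttc (c.H (s2 j))) atTop (nhds δ2) → ¬ (δ1 < δ2) := by
    intro s1 s2 hs1 hs2 δ1 δ2 hδ1 hδ2 hlt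
    have ha1 : c.aL ≤ δ1 := c.aL_le_of_limpt hs1 hδ1
    have hδ2le : δ2 ≤ 1 :=
      le_of_tendsto hδ2 (Filter.Eventually.of_forall (fun j => ttc_le_one _))
    set y := (δ1 + δ2)/2 with hy
    have hy1 : δ1 < y := by rw [hy]; linarith
    have hy2 : y < δ2 := by rw [hy]; linarith
    have hym1 : -1 < y := by
      have := c.aL_nonneg; rw [hy]; nlinarith [lt_of_le_of_lt ha1 hlt]
    have hyl1 : y < 1 := lt_of_lt_of_le hy2 hδ2le
    have htanh : Real.tanh (artanh y) = y := tanh_artanh hym1 hyl1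
    have h0 : c.podL (artanh y) = 0 := by
      apply c.lpA hs1 hδ1 (lt_of_lt_of_le hlt hδ2le)
      rw [htanh]; exact hy1
    have hpos : 0 < c.podL (artanh y) := by
      apply c.lpB hs2 hδ2 <;> rw [htanh]
      · exact lt_of_le_of_lt ha1 hy1
      · exact hy2
    rw [h0] at hpos
    exact lt_irrefl 0 hpos
  rcases lt_trichotomy γ1 γ2 with h | h | h
  · exact absurd h (key r1 r2 hr1 hr2 γ1 γ2 hγ1 hγ2)
  · exact h
  · exact absurd h (key r2 r1 hr2 hr1 γ2 γ1 hγ2 hγ1)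

/-- The tanh-coalescence times converge. -/
lemma ttc_tendsto : ∃ cstar : ℝ, c.aL ≤ cstar ∧ cstar ≤ 1 ∧
    Tendsto (fun k => ttc (c.H k)) atTop (nhds cstar) := by
  have hmem : ∀ k : ℕ, ttc (c.H k) ∈ Set.Icc (0:ℝ) 1 :=
    fun k => ⟨ttc_nonneg _, ttc_le_one _⟩
  obtain ⟨γ0, hγ0mem, r0, hr0mono, hr0⟩ :=
    (isCompact_Icc (a := (0:ℝ)) (b := 1)).tendsto_subseq hmem
  have hconv : Tendsto (fun k => ttc (c.H k)) atTop (nhds γ0) := by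
    apply tendsto_of_subseq_tendsto
    intro ns hns
    obtain ⟨γ1, _, φ, hφmono, hφ⟩ :=
      (isCompact_Icc (a := (0:ℝ)) (b := 1)).tendsto_subseq (fun j => hmem (ns j))
    have heq : γ1 = γ0 :=
      c.limpt_unique (hns.comp hφmono.tendsto_atTop) hr0mono.tendsto_atTop hφ hr0
    exact ⟨φ, heq ▸ hφ⟩
  exact ⟨γ0, c.aL_le_of_limpt hr0mono.tendsto_atTop hr0, hγ0mem.2, hconv⟩

/-- In the degenerate case (limit pod interval = all of (0,1) in tanh time), the
approximating pairs eventually have exactly `t⁺ = 0` and no finite coalescence. -/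
lemma deg_eventually {cstar : ℝ}
    (hconv : Tendsto (fun k => ttc (c.H k)) atTop (nhds cstar))
    (hdeg : cstar - c.aL = 1) :
    ∀ᶠ k in atTop, ttPlus (c.H k) = 0 ∧ ttc (c.H k) = 1 := by
  have hcs1 : cstar ≤ 1 :=
    le_of_tendsto hconv (Filter.Eventually.of_forall (fun j => ttc_le_one _))
  have haL : c.aL = 0 := by linarith [c.aL_nonneg]
  have hcs : cstar = 1 := by linarith
  by_contra hcon
  rw [Filter.not_eventually] at hcon
  obtain ⟨r, hrt, hrp⟩ := Filter.frequently_iff_seq_forall.1 hcon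
  have hb : ∀ j, ttm (c.H (r j)) - ttPlus (c.H (r j)) < 1/2 := by
    intro j
    have h1 := hrp j
    rw [breakpoint1_eq]
    have h2 : ttc (c.H (r j)) - ttPlus (c.H (r j)) ≤ 1 := ttc_sub_ttPlus_le_one _
    rcases lt_or_eq_of_le h2 with h3 | h3
    · linarith
    · exfalso
      apply h1
      have := ttc_le_one (c.H (r j))
      have := ttPlus_nonneg (c.H (r j))
      constructor <;> linarith
  -- the positive value of the limit pod at the middle
  set t0 := artanh (1/2) with ht0def
  have htanh : Real.tanh t0 = 1/2 := tanh_artanh (by norm_num) (by norm_num)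
  have hP0 : 0 < c.podL t0 := by
    apply c.lpB (r := fun j => j) tendsto_id hconv
    · rw [htanh, haL]; norm_num
    · rw [htanh, hcs]; norm_num
  set P0 := c.podL t0 with hP0def
  -- ttm along r tends to 1/2
  have hmm : Tendsto (fun j => ttm (c.H (r j))) atTop (nhds ((c.aL + cstar)/2)) :=
    c.ttm_tendsto_aux hrt (hconv.comp hrt)
  have hmm' : Tendsto (fun j => ttm (c.H (r j))) atTop (nhds (1/2)) := by
    have : (c.aL + cstar)/2 = 1/2 := by rw [haL, hcs]; norm_num
    rwa [this] at hmm
  -- v j : the pod value at the moving middle point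
  have hv : Tendsto (fun j => pod (c.H (r j)) (artanh (ttm (c.H (r j))))) atTop
      (nhds P0) := by
    apply c.pod_move hrt
    · have hart : ContinuousAt artanh (1/2) := continuousAt_artanh (by norm_num) (by norm_num)
      exact hart.tendsto.comp hmm'
    · exact Filter.Eventually.of_forall (fun j => artanh_nonneg (ttm_nonneg _) (ttm_lt_one _))
  -- v j is the standard pod at the moving breakpoint
  have hveq : ∀ j, stdPod (c.H (r j)) (ttm (c.H (r j)) - ttPlus (c.H (r j)))
      = pod (c.H (r j)) (artanh (ttm (c.H (r j)))) := by
    intro j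
    rw [stdPod_p1 _ (le_refl _)]
    congr 2
    ring
  -- the standard pod at 1/2 along r equals the raised middle value
  have hmid : ∀ j, stdPod (c.H (r j)) (1/2)
      = podT (c.H (r j)) (ttm (c.H (r j))) + (1 - (ttc (c.H (r j)) - ttm (c.H (r j))))/2 := by
    intro j
    have h1 : ¬ ((1:ℝ)/2 ≤ ttm (c.H (r j)) - ttPlus (c.H (r j))) := by
      push_neg; exact hb j
    rw [stdPod_p2 _ h1 (le_refl _)]
    have hne : (1:ℝ)/2 - (ttm (c.H (r j)) - ttPlus (c.H (r j))) ≠ 0 := by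
      have := hb j; intro hcc; linarith
    rw [mul_comm, mul_div_assoc, div_self hne, mul_one]
  have hmidlim : Tendsto (fun j => stdPod (c.H (r j)) (1/2)) atTop (nhds (P0 + 1/4)) := by
    have h1 : Tendsto (fun j => podT (c.H (r j)) (ttm (c.H (r j)))) atTop (nhds P0) := by
      have : ∀ j, podT (c.H (r j)) (ttm (c.H (r j)))
          = pod (c.H (r j)) (artanh (ttm (c.H (r j)))) := fun j => rfl
      rw [funext this]
      exact hv
    have h2 : Tendsto (fun j => (1 - (ttc (c.H (r j)) - ttm (c.H (r j))))/2) atTop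
        (nhds ((1 - (cstar - 1/2))/2)) :=
      ((tendsto_const_nhds.sub ((hconv.comp hrt).sub hmm')).div_const 2)
    have h3 := h1.add h2
    have h4 : (1 - (cstar - 1/2))/2 = 1/4 := by rw [hcs]; norm_num
    rw [h4] at h3
    apply h3.congr
    intro j
    rw [hmid j]
  -- the moving-point limit
  have hvlim : Tendsto (fun j => stdPod (c.H (r j)) (ttm (c.H (r j)) - ttPlus (c.H (r j))))
      atTop (nhds P0) := by
    apply hv.congr
    intro j
    exact (hveq j).symm
  -- 1/2 is in window 1
  have h12mem : (1:ℝ)/2 ∈ Wind 1 := by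
    constructor <;> norm_num
  -- breakpoints eventually in window 1
  have hbev : ∀ᶠ j in atTop, ttm (c.H (r j)) - ttPlus (c.H (r j)) ∈ Wind 1 := by
    have hB : Tendsto (fun j => ttm (c.H (r j)) - ttPlus (c.H (r j))) atTop (nhds (1/2)) := by
      have := hmm'.sub (c.ttPlus_tendsto.comp hrt)
      rw [haL, sub_zero] at this
      exact this
    have hlo : (((1:ℕ):ℝ)+2)⁻¹ < 1/2 := by norm_num
    have hhi : (1:ℝ)/2 < 1 - (((1:ℕ):ℝ)+2)⁻¹ := by norm_num
    filter_upwards [hB.eventually (eventually_gt_nhds hlo),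
      hB.eventually (eventually_lt_nhds hhi)] with j h1 h2
    exact ⟨h1.le, h2.le⟩
  -- the contradiction via window-Cauchy bounds
  have hgap : (0:ℝ) < 1/P0 - 1/(P0 + 1/4) := by
    rw [sub_pos]
    apply div_lt_div_of_pos_left one_pos hP0
    linarith
  obtain ⟨l1, hl1⟩ := exists_pow_lt_of_lt_one
    (show (0:ℝ) < (1/P0 - 1/(P0 + 1/4))/32 by linarith)
    (show (2:ℝ)⁻¹ < 1 by norm_num)
  set l0 := max l1 4 with hl0def
  have hl0 : (2:ℝ)⁻¹ ^ l0 < (1/P0 - 1/(P0 + 1/4))/32 :=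
    lt_of_le_of_lt (pow_half_le (le_max_left _ _)) hl1
  have hl04 : 1 + 3 ≤ l0 := le_max_right _ _
  -- bound (*) : |1/p_{l0}(1/2) - 1/(P0+1/4)| ≤ 8 * 2⁻¹^l0
  have hstar1 : |1 / stdPod (c.H l0) (1/2) - 1/(P0 + 1/4)| ≤ 2^(1+2) * (2:ℝ)⁻¹^l0 := by
    have hter : Tendsto (fun j => |1 / stdPod (c.H l0) (1/2) - 1 / stdPod (c.H (r j)) (1/2)|)
        atTop (nhds (|1 / stdPod (c.H l0) (1/2) - 1/(P0 + 1/4)|)) := by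
      apply Tendsto.abs
      apply Tendsto.sub tendsto_const_nhds
      exact Tendsto.div tendsto_const_nhds hmidlim (by positivity)
    apply le_of_tendsto hter
    filter_upwards [hrt.eventually (eventually_ge_atTop l0)] with j hj
    exact c.wb hl04 hj h12mem
  -- bound (**) : |1/p_{l0}(1/2) - 1/P0| ≤ 8 * 2⁻¹^l0
  have hstar2 : |1 / stdPod (c.H l0) (1/2) - 1/P0| ≤ 2^(1+2) * (2:ℝ)⁻¹^l0 := by
    have hcw : Tendsto (fun j => 1 / stdPod (c.H l0) (ttm (c.H (r j)) - ttPlus (c.H (r j))))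
        atTop (nhds (1 / stdPod (c.H l0) (1/2))) := by
      have hcwa : ContinuousWithinAt (fun x => 1 / stdPod (c.H l0) x) (Wind 1) (1/2) :=
        (invPod_contOn (c.H l0) 1) _ h12mem
      apply hcwa.tendsto.comp
      rw [tendsto_nhdsWithin_iff]
      constructor
      · have := hmm'.sub (c.ttPlus_tendsto.comp hrt)
        rwa [haL, sub_zero] at this
      · exact hbev
    have hter : Tendsto (fun j => |1 / stdPod (c.H l0) (ttm (c.H (r j)) - ttPlus (c.H (r j)))
        - 1 / stdPod (c.H (r j)) (ttm (c.H (r j)) - ttPlus (c.H (r j)))|) atTop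
        (nhds (|1 / stdPod (c.H l0) (1/2) - 1/P0|)) := by
      apply Tendsto.abs
      exact hcw.sub (Tendsto.div tendsto_const_nhds hvlim (ne_of_gt hP0))
    apply le_of_tendsto hter
    filter_upwards [hrt.eventually (eventually_ge_atTop l0), hbev] with j hj hjW
    exact c.wb hl04 hj hjW
  -- contradiction
  have habs := abs_sub_abs_le_abs_sub (1 / stdPod (c.H l0) (1/2) - 1/(P0 + 1/4))
    (1 / stdPod (c.H l0) (1/2) - 1/P0)
  have h1 := abs_le.1 hstar1
  have h2 := abs_le.1 hstar2
  have : 1/P0 - 1/(P0+1/4) ≤ 16 * (2:ℝ)⁻¹^l0 := by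
    have e1 := h1.1; have e2 := h1.2; have e3 := h2.1; have e4 := h2.2
    have hpow : (2:ℝ)^(1+2) = 8 := by norm_num
    rw [hpow] at e1 e2 e3 e4
    linarith
  linarith

end LimCtx
end CCom
namespace CCom
open Set Filter Topology

lemma tendsto_dichotomy {f1 f2 g : ℕ → ℝ} {L : ℝ}
    (h1 : Tendsto f1 atTop (nhds L)) (h2 : Tendsto f2 atTop (nhds L))
    (hev : ∀ᶠ k in atTop, g k = f1 k ∨ g k = f2 k) : Tendsto g atTop (nhds L) := by
  rw [Metric.tendsto_atTop] at h1 h2 ⊢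
  intro ε hε
  obtain ⟨N1, hN1⟩ := h1 ε hε
  obtain ⟨N2, hN2⟩ := h2 ε hε
  rw [eventually_atTop] at hev
  obtain ⟨N3, hN3⟩ := hev
  refine ⟨max (max N1 N2) N3, fun k hk => ?_⟩
  rcases hN3 k (le_trans (le_max_right _ _) hk) with h | h
  · rw [h]; exact hN1 k (le_trans (le_trans (le_max_left _ _) (le_max_left _ _)) hk)
  · rw [h]; exact hN2 k (le_trans (le_trans (le_max_right _ _) (le_max_left _ _)) hk)

lemma stdPod_deg_eq {X : CoalPair} (ha : ttPlus X = 0) (hc : ttc X = 1) {x : ℝ} :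
    stdPod X x = pod X (artanh x) := by
  have hm : ttm X = 1/2 := by rw [ttm_eq, ha, hc]; norm_num
  rcases le_or_gt x (1/2) with h | h
  · have hcond : x ≤ ttm X - ttPlus X := by rw [hm, ha]; simpa using h
    rw [stdPod_p1 X hcond, ha, add_zero]
  · have hcond : ¬ x ≤ 1 - (ttc X - ttm X) := by
      rw [hm, hc]; push_neg; norm_num; exact h
    rw [stdPod_p4 X hcond, hc]
    norm_num

namespace LimCtx

variable (c : LimCtx)

/-- Pointwise convergence of the standard pods to the standard pod of the limit pair. -/
lemma alpha {G : CoalPair} {cstar : ℝ}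
    (hGA : G.p1 = c.A) (hGB : G.p2 = c.B)
    (hGa : ttPlus G = c.aL) (hGc : ttc G = cstar)
    (hconv : Tendsto (fun k => ttc (c.H k)) atTop (nhds cstar))
    {x : ℝ} (hx0 : 0 < x) (hx1 : x < 1) :
    Tendsto (fun k => stdPod (c.H k) x) atTop (nhds (stdPod G x)) := by
  have hpod : ∀ t, pod G t = c.podL t := by
    intro t; unfold pod podL; rw [hGA, hGB]
  have hta : Tendsto (fun k => ttPlus (c.H k)) atTop (nhds (ttPlus G)) := by
    rw [hGa]; exact c.ttPlus_tendsto
  have htc : Tendsto (fun k => ttc (c.H k)) atTop (nhds (ttc G)) := by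
    rw [hGc]; exact hconv
  have htm : Tendsto (fun k => ttm (c.H k)) atTop (nhds (ttm G)) := by
    have h0 := (hta.add htc).div_const 2
    rw [← ttm_eq] at h0
    exact h0.congr (fun k => (ttm_eq _).symm)
  have hB1lim : Tendsto (fun k => ttm (c.H k) - ttPlus (c.H k)) atTop
      (nhds (ttm G - ttPlus G)) := htm.sub hta
  have haG0 : 0 ≤ ttPlus G := ttPlus_nonneg G
  have haG1 : ttPlus G < 1 := ttPlus_lt_one G
  have hcG1 : ttc G ≤ 1 := ttc_le_one G
  have hacG : ttPlus G ≤ ttc G := ttPlus_le_ttc G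
  have hmG1 : ttm G < 1 := ttm_lt_one G
  have hmG0 : 0 ≤ ttm G := ttm_nonneg G
  -- convergence of podT at the moving middle
  have hPTm : Tendsto (fun k => podT (c.H k) (ttm (c.H k))) atTop
      (nhds (podT G (ttm G))) := by
    have hs : Tendsto (fun k => artanh (ttm (c.H k))) atTop (nhds (artanh (ttm G))) :=
      ((continuousAt_artanh (by linarith) hmG1).tendsto).comp htm
    have := c.pod_move (r := fun k => k) tendsto_id hs
      (Filter.Eventually.of_forall (fun k => artanh_nonneg (ttm_nonneg _) (ttm_lt_one _)))
    rwa [podT_eq, hpod] 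
  -- the generic moving-time limits for pieces 1 and 4
  have hT1lim : x + ttPlus G < 1 →
      Tendsto (fun k => pod (c.H k) (artanh (x + ttPlus (c.H k)))) atTop
        (nhds (pod G (artanh (x + ttPlus G)))) := by
    intro hlt
    have hs : Tendsto (fun k => x + ttPlus (c.H k)) atTop (nhds (x + ttPlus G)) :=
      tendsto_const_nhds.add hta
    have hs' : Tendsto (fun k => artanh (x + ttPlus (c.H k))) atTop
        (nhds (artanh (x + ttPlus G))) :=
      ((continuousAt_artanh (by linarith) hlt).tendsto).comp hs
    have hev : ∀ᶠ k in atTop, 0 ≤ artanh (x + ttPlus (c.H k)) := by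
      filter_upwards [hs.eventually (eventually_lt_nhds hlt)] with k hk
      exact artanh_nonneg (by linarith [ttPlus_nonneg (c.H k)]) hk
    have := c.pod_move (r := fun k => k) tendsto_id hs' hev
    rwa [hpod]
  have hT4lim : 0 < x - (1 - ttc G) →
      Tendsto (fun k => pod (c.H k) (artanh (x - (1 - ttc (c.H k))))) atTop
        (nhds (pod G (artanh (x - (1 - ttc G))))) := by
    intro hgt
    have hlt : x - (1 - ttc G) < 1 := by linarith
    have hs : Tendsto (fun k => x - (1 - ttc (c.H k))) atTop (nhds (x - (1 - ttc G))) :=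
      tendsto_const_nhds.sub (tendsto_const_nhds.sub htc)
    have hs' : Tendsto (fun k => artanh (x - (1 - ttc (c.H k)))) atTop
        (nhds (artanh (x - (1 - ttc G)))) :=
      ((continuousAt_artanh (by linarith) hlt).tendsto).comp hs
    have hev : ∀ᶠ k in atTop, 0 ≤ artanh (x - (1 - ttc (c.H k))) := by
      filter_upwards [hs.eventually (eventually_lt_nhds hlt),
        hs.eventually (eventually_gt_nhds hgt)] with k hk1 hk2
      exact artanh_nonneg hk2.le hk1
    have := c.pod_move (r := fun k => k) tendsto_id hs' hev
    rwa [hpod]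
  by_cases hdeg : ttc G - ttPlus G = 1
  · -- degenerate case
    have haL0 : ttPlus G = 0 := by linarith [ttPlus_nonneg G, ttc_le_one G]
    have hcL1 : ttc G = 1 := by linarith
    have hdegev := c.deg_eventually hconv (by rw [← hGa, ← hGc]; exact hdeg)
    have hGdeg : stdPod G x = pod G (artanh x) := stdPod_deg_eq haL0 hcL1
    rw [hGdeg, hpod]
    have hlim := c.pod_move (r := fun k => k) tendsto_id
      (tendsto_const_nhds (x := artanh x))
      (Filter.Eventually.of_forall (fun _ => artanh_nonneg hx0.le hx1))
    apply hlim.congr'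
    filter_upwards [hdegev] with k hk
    exact (stdPod_deg_eq hk.1 hk.2).symm
  · -- nondegenerate case
    have hlt1 : ttc G - ttPlus G < 1 := lt_of_le_of_ne (ttc_sub_ttPlus_le_one G) hdeg
    have hB1h : ttm G - ttPlus G < 1/2 := by rw [breakpoint1_eq]; linarith
    have hB3h : 1/2 < 1 - (ttc G - ttm G) := by rw [breakpoint3_eq]; linarith
    have hD2ne : (1:ℝ)/2 - (ttm G - ttPlus G) ≠ 0 := by intro hcc; linarith
    have hD3ne : (1 - (ttc G - ttm G)) - 1/2 ≠ 0 := by intro hcc; linarith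
    -- the limits of the four formulas
    have hF2 : Tendsto (fun k => podT (c.H k) (ttm (c.H k)) + (x - (ttm (c.H k) - ttPlus (c.H k))) *
        ((1 - (ttc (c.H k) - ttm (c.H k)))/2) / (1/2 - (ttm (c.H k) - ttPlus (c.H k)))) atTop
        (nhds (podT G (ttm G) + (x - (ttm G - ttPlus G)) *
          ((1 - (ttc G - ttm G))/2) / (1/2 - (ttm G - ttPlus G)))) := by
      apply hPTm.add
      apply Tendsto.div
      · exact (tendsto_const_nhds.sub hB1lim).mul
          ((tendsto_const_nhds.sub (htc.sub htm)).div_const 2)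
      · exact tendsto_const_nhds.sub hB1lim
      · exact hD2ne
    have hF3 : Tendsto (fun k => (podT (c.H k) (ttm (c.H k)) + (1 - (ttc (c.H k) - ttm (c.H k)))/2)
        - (x - 1/2) * ((1 - (ttc (c.H k) - ttm (c.H k)))/2) / ((1 - (ttc (c.H k) - ttm (c.H k))) - 1/2))
        atTop (nhds ((podT G (ttm G) + (1 - (ttc G - ttm G))/2)
          - (x - 1/2) * ((1 - (ttc G - ttm G))/2) / ((1 - (ttc G - ttm G)) - 1/2))) := by
      apply Tendsto.sub
      · exact hPTm.add ((tendsto_const_nhds.sub (htc.sub htm)).div_const 2)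
      · apply Tendsto.div
        · exact tendsto_const_nhds.mul ((tendsto_const_nhds.sub (htc.sub htm)).div_const 2)
        · exact (tendsto_const_nhds.sub (htc.sub htm)).sub tendsto_const_nhds
        · exact hD3ne
    rcases lt_trichotomy x (ttm G - ttPlus G) with hc1 | hc1 | hc1
    · -- strictly inside piece 1
      have hx1' : x + ttPlus G < 1 := by rw [breakpoint1_eq] at hc1; linarith
      have hGx : stdPod G x = pod G (artanh (x + ttPlus G)) := stdPod_p1 G hc1.le
      rw [hGx]
      apply (hT1lim hx1').congr'
      filter_upwards [hB1lim.eventually (eventually_gt_nhds hc1)] with k hk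
      exact (stdPod_p1 (c.H k) hk.le).symm
    · -- at the first breakpoint
      have hxm : x + ttPlus G = ttm G := by rw [hc1]; ring
      have hx1' : x + ttPlus G < 1 := by rw [hxm]; exact hmG1
      have hGx : stdPod G x = pod G (artanh (x + ttPlus G)) := stdPod_p1 G hc1.le
      have hval : pod G (artanh (x + ttPlus G)) = podT G (ttm G) := by
        rw [← podT_eq]
        congr 1
      rw [hGx, hval]
      apply tendsto_dichotomy (f1 := fun k => pod (c.H k) (artanh (x + ttPlus (c.H k))))
        (f2 := fun k => podT (c.H k) (ttm (c.H k)) + (x - (ttm (c.H k) - ttPlus (c.H k))) *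
          ((1 - (ttc (c.H k) - ttm (c.H k)))/2) / (1/2 - (ttm (c.H k) - ttPlus (c.H k))))
      · have := hT1lim hx1'
        rwa [hval] at this
      · have h2 : (x - (ttm G - ttPlus G)) * ((1 - (ttc G - ttm G))/2) / (1/2 - (ttm G - ttPlus G))
            = 0 := by rw [← hc1]; simp
        have := hF2
        rw [h2, add_zero] at this
        exact this
      · have hhalf : x ≤ 1/2 := by rw [hc1]; exact hB1h.le
        apply Filter.Eventually.of_forall
        intro k
        rcases le_or_gt x (ttm (c.H k) - ttPlus (c.H k)) with h | h
        · left; exact stdPod_p1 (c.H k) h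
        · right; exact stdPod_p2 (c.H k) (not_le.2 h) hhalf
    rcases lt_trichotomy x (1/2 : ℝ) with hc2 | hc2 | hc2
    · -- strictly inside piece 2
      have hGx := stdPod_p2 G (not_le.2 hc1) hc2.le
      rw [hGx]
      apply hF2.congr'
      filter_upwards [hB1lim.eventually (eventually_lt_nhds hc1)] with k hk
      exact (stdPod_p2 (c.H k) (not_le.2 hk) hc2.le).symm
    · -- at one half
      have hGx := stdPod_p2 G (not_le.2 hc1) hc2.le
      have hmid : stdPod G x = podT G (ttm G) + (1 - (ttc G - ttm G))/2 := by
        rw [hGx, hc2, mul_comm, mul_div_assoc, div_self hD2ne, mul_one]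
      rw [hmid]
      have hF2' : Tendsto (fun k => podT (c.H k) (ttm (c.H k)) + (x - (ttm (c.H k) - ttPlus (c.H k))) *
          ((1 - (ttc (c.H k) - ttm (c.H k)))/2) / (1/2 - (ttm (c.H k) - ttPlus (c.H k)))) atTop
          (nhds (podT G (ttm G) + (1 - (ttc G - ttm G))/2)) := by
        have heq : (x - (ttm G - ttPlus G)) * ((1 - (ttc G - ttm G))/2) / (1/2 - (ttm G - ttPlus G))
            = (1 - (ttc G - ttm G))/2 := by
          rw [hc2, mul_comm, mul_div_assoc, div_self hD2ne, mul_one]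
        have := hF2
        rw [heq] at this
        exact this
      apply hF2'.congr'
      have hB1x : ttm G - ttPlus G < x := hc1
      filter_upwards [hB1lim.eventually (eventually_lt_nhds hB1x)] with k hk
      exact (stdPod_p2 (c.H k) (not_le.2 hk) hc2.le).symm
    rcases lt_trichotomy x (1 - (ttc G - ttm G)) with hc3 | hc3 | hc3
    · -- strictly inside piece 3
      have hGx := stdPod_p3 G (not_le.2 (lt_trans hB1h hc2)) (not_le.2 hc2) hc3.le
      rw [hGx]
      have hB3lim : Tendsto (fun k => 1 - (ttc (c.H k) - ttm (c.H k))) atTop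
          (nhds (1 - (ttc G - ttm G))) := tendsto_const_nhds.sub (htc.sub htm)
      apply hF3.congr'
      filter_upwards [hB3lim.eventually (eventually_gt_nhds hc3),
        hB1lim.eventually (eventually_lt_nhds (lt_trans hB1h hc2))] with k hk hk2
      exact (stdPod_p3 (c.H k) (not_le.2 hk2) (not_le.2 hc2) hk.le).symm
    · -- at the second breakpoint
      have hmeq2 := ttm_eq G
      have hcm : ttm G < ttc G := by
        have h5 : 0 < ttc G - ttm G := by
          have := hx1
          rw [hc3] at this
          linarith
        linarith
      have hca : ttPlus G < ttc G := by rw [hmeq2] at hcm; linarith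
      have hmpos : 0 < ttm G := by rw [hmeq2]; linarith
      have hgt4 : 0 < x - (1 - ttc G) := by
        rw [hc3]
        have : 1 - (ttc G - ttm G) - (1 - ttc G) = ttm G := by ring
        linarith
      have hGx := stdPod_p3 G (not_le.2 (lt_trans hB1h hc2)) (not_le.2 hc2) hc3.le
      have hval : stdPod G x = podT G (ttm G) := by
        rw [hGx, hc3]
        rw [mul_comm, mul_div_assoc, div_self hD3ne, mul_one]
        ring
      rw [hval]
      have hvalT : pod G (artanh (x - (1 - ttc G))) = podT G (ttm G) := by
        rw [← podT_eq]
        congr 1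
        rw [hc3]
        ring
      apply tendsto_dichotomy
        (f1 := fun k => (podT (c.H k) (ttm (c.H k)) + (1 - (ttc (c.H k) - ttm (c.H k)))/2)
          - (x - 1/2) * ((1 - (ttc (c.H k) - ttm (c.H k)))/2) / ((1 - (ttc (c.H k) - ttm (c.H k))) - 1/2))
        (f2 := fun k => pod (c.H k) (artanh (x - (1 - ttc (c.H k)))))
      · have heq : (podT G (ttm G) + (1 - (ttc G - ttm G))/2)
            - (x - 1/2) * ((1 - (ttc G - ttm G))/2) / ((1 - (ttc G - ttm G)) - 1/2)
            = podT G (ttm G) := by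
          rw [hc3, mul_comm, mul_div_assoc, div_self hD3ne, mul_one]
          ring
        have := hF3
        rw [heq] at this
        exact this
      · have := hT4lim hgt4
        rwa [hvalT] at this
      · apply Filter.Eventually.of_forall
        intro k
        rcases le_or_gt x (1 - (ttc (c.H k) - ttm (c.H k))) with h | h
        · left
          exact stdPod_p3 (c.H k) (not_le.2 (lt_of_le_of_lt (breakpoint1_le_half _) hc2))
            (not_le.2 hc2) h
        · right
          exact stdPod_p4 (c.H k) (not_le.2 h)
    · -- strictly inside piece 4
      have hgt4 : 0 < x - (1 - ttc G) := by
        have h6 : 1 - (ttc G - ttm G) - (1 - ttc G) = ttm G := by ring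
        have h7 := ttm_nonneg G
        linarith
      have hGx := stdPod_p4 G (not_le.2 hc3)
      rw [hGx]
      have hB3lim : Tendsto (fun k => 1 - (ttc (c.H k) - ttm (c.H k))) atTop
          (nhds (1 - (ttc G - ttm G))) := tendsto_const_nhds.sub (htc.sub htm)
      apply (hT4lim hgt4).congr'
      filter_upwards [hB3lim.eventually (eventually_lt_nhds hc3)] with k hk
      exact (stdPod_p4 (c.H k) (not_le.2 hk)).symm

end LimCtx
end CCom
namespace CCom
open Set Filter Topology

namespace LimCtx

variable (c : LimCtx)

/-- Convergence of the pod-comparison functional along the subsequence. -/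
lemma delta_conv {G : CoalPair} {cstar : ℝ}
    (hGA : G.p1 = c.A) (hGB : G.p2 = c.B)
    (hGa : ttPlus G = c.aL) (hGc : ttc G = cstar)
    (hconv : Tendsto (fun k => ttc (c.H k)) atTop (nhds cstar)) :
    Tendsto (fun k => Delta (stdPod (c.H k)) (stdPod G)) atTop (nhds 0) := by
  have hbound : ∀ n j : ℕ, n + 3 ≤ j →
      DSup (stdPod (c.H j)) (stdPod G) n ≤ 2^(n+2) * (2:ℝ)⁻¹^j := by
    intro n j hj
    apply DSup_le
    intro x hx
    have hx01 := Wind_subset n hx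
    have hGpos := stdPod_pos G hx01.1 hx01.2
    have hlim : Tendsto (fun l => |1 / stdPod (c.H j) x - 1 / stdPod (c.H l) x|) atTop
        (nhds (|1 / stdPod (c.H j) x - 1 / stdPod G x|)) := by
      apply Tendsto.abs
      apply tendsto_const_nhds.sub
      exact Tendsto.div tendsto_const_nhds
        (c.alpha hGA hGB hGa hGc hconv hx01.1 hx01.2) (ne_of_gt hGpos)
    apply le_of_tendsto hlim
    filter_upwards [eventually_ge_atTop j] with l hl
    exact c.wb hj hl hx
  rw [Metric.tendsto_atTop]
  intro ε hε
  obtain ⟨N, hN⟩ := exists_pow_lt_of_lt_one (half_pos hε) (show (2:ℝ)⁻¹ < 1 by norm_num)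
  obtain ⟨J0, hJ0⟩ := exists_pow_lt_of_lt_one
    (show (0:ℝ) < (ε/4) / 2^(N+2) by positivity) (show (2:ℝ)⁻¹ < 1 by norm_num)
  refine ⟨max J0 (N+3), fun j hj => ?_⟩
  have hjJ0 : J0 ≤ j := le_trans (le_max_left _ _) hj
  have hjN3 : N + 3 ≤ j := le_trans (le_max_right _ _) hj
  have hsmall : (2:ℝ)^(N+2) * (2:ℝ)⁻¹^j < ε/4 := by
    have h1 : (2:ℝ)⁻¹^j ≤ (2:ℝ)⁻¹^J0 := pow_half_le hjJ0
    have h2 : (2:ℝ)⁻¹^J0 < (ε/4) / 2^(N+2) := hJ0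
    have h3 : (0:ℝ) < 2^(N+2) := by positivity
    calc (2:ℝ)^(N+2) * (2:ℝ)⁻¹^j ≤ (2:ℝ)^(N+2) * (2:ℝ)⁻¹^J0 := by
          exact mul_le_mul_of_nonneg_left h1 (by positivity)
      _ < (2:ℝ)^(N+2) * ((ε/4) / 2^(N+2)) := by
          exact mul_lt_mul_of_pos_left h2 h3
      _ = ε/4 := by
          field_simp
  rw [Real.dist_eq, sub_zero, abs_of_nonneg (Delta_nonneg _ _)]
  have hD : Delta (stdPod (c.H j)) (stdPod G) ≤ ε/4 + (2:ℝ)⁻¹^N := by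
    apply Delta_le N (by linarith)
    intro n hn
    have h1 : n + 3 ≤ j := by omega
    have h2 := hbound n j h1
    have h3 : (2:ℝ)^(n+2) * (2:ℝ)⁻¹^j ≤ (2:ℝ)^(N+2) * (2:ℝ)⁻¹^j := by
      apply mul_le_mul_of_nonneg_right _ (by positivity)
      apply pow_le_pow_right₀ (by norm_num)
      omega
    calc min (DSup (stdPod (c.H j)) (stdPod G) n) 1
        ≤ DSup (stdPod (c.H j)) (stdPod G) n := min_le_left _ _
      _ ≤ (2:ℝ)^(n+2) * (2:ℝ)⁻¹^j := h2
      _ ≤ (2:ℝ)^(N+2) * (2:ℝ)⁻¹^j := h3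
      _ ≤ ε/4 := hsmall.le
  linarith

end LimCtx

lemma min_dprime_le (x : PathP) (Y Z : CoalPair) :
    min (dprime x Z.p1) (dprime x Z.p2) ≤ min (dprime x Y.p1) (dprime x Y.p2) + dbar Y Z := by
  have hbar1 : min (dprime Y.p1 Z.p1) (dprime Y.p1 Z.p2) ≤ dbar Y Z := le_max_left _ _
  have hbar2 : min (dprime Y.p2 Z.p1) (dprime Y.p2 Z.p2) ≤ dbar Y Z := le_max_right _ _
  rcases le_total (dprime x Y.p1) (dprime x Y.p2) with h | h
  · rw [min_eq_left h]
    rcases le_total (dprime Y.p1 Z.p1) (dprime Y.p1 Z.p2) with h2 | h2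
    · rw [min_eq_left h2] at hbar1
      calc min (dprime x Z.p1) (dprime x Z.p2) ≤ dprime x Z.p1 := min_le_left _ _
        _ ≤ dprime x Y.p1 + dprime Y.p1 Z.p1 := dprime_triangle _ _ _
        _ ≤ _ := by linarith
    · rw [min_eq_right h2] at hbar1
      calc min (dprime x Z.p1) (dprime x Z.p2) ≤ dprime x Z.p2 := min_le_right _ _
        _ ≤ dprime x Y.p1 + dprime Y.p1 Z.p2 := dprime_triangle _ _ _
        _ ≤ _ := by linarith
  · rw [min_eq_right h]
    rcases le_total (dprime Y.p2 Z.p1) (dprime Y.p2 Z.p2) with h2 | h2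
    · rw [min_eq_left h2] at hbar2
      calc min (dprime x Z.p1) (dprime x Z.p2) ≤ dprime x Z.p1 := min_le_left _ _
        _ ≤ dprime x Y.p2 + dprime Y.p2 Z.p1 := dprime_triangle _ _ _
        _ ≤ _ := by linarith
    · rw [min_eq_right h2] at hbar2
      calc min (dprime x Z.p1) (dprime x Z.p2) ≤ dprime x Z.p2 := min_le_right _ _
        _ ≤ dprime x Y.p2 + dprime Y.p2 Z.p2 := dprime_triangle _ _ _
        _ ≤ _ := by linarith

lemma dbar_triangle (X Y Z : CoalPair) : dbar X Z ≤ dbar X Y + dbar Y Z := by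
  apply max_le
  · calc min (dprime X.p1 Z.p1) (dprime X.p1 Z.p2)
        ≤ min (dprime X.p1 Y.p1) (dprime X.p1 Y.p2) + dbar Y Z := min_dprime_le _ _ _
      _ ≤ dbar X Y + dbar Y Z := by
          have : min (dprime X.p1 Y.p1) (dprime X.p1 Y.p2) ≤ dbar X Y := le_max_left _ _
          linarith
  · calc min (dprime X.p2 Z.p1) (dprime X.p2 Z.p2)
        ≤ min (dprime X.p2 Y.p1) (dprime X.p2 Y.p2) + dbar Y Z := min_dprime_le _ _ _
      _ ≤ dbar X Y + dbar Y Z := by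
          have : min (dprime X.p2 Y.p1) (dprime X.p2 Y.p2) ≤ dbar X Y := le_max_right _ _
          linarith

lemma dtilde_triangle (X Y Z : CoalPair) : dtilde X Z ≤ dtilde X Y + dtilde Y Z := by
  unfold dtilde
  have h1 := dbar_triangle X Y Z
  have h2 := Delta_triangle (p := stdPod X) (q := stdPod Z) (r := stdPod Y)
    (fun n => DSup_bddAbove X Y n) (fun n => DSup_bddAbove Y Z n)
  linarith

end CCom

open CCom

/-- completeness of (𝒞, d̃): every Cauchy sequence converges to a
coalescing pair; in particular the limit paths are separated strictly inside the pod and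
agree from the coalescence time on (when finite). -/
theorem C_complete (F : ℕ → CoalPair)
    (hC : ∀ ε > (0:ℝ), ∃ N : ℕ, ∀ m ≥ N, ∀ n ≥ N, dtilde (F m) (F n) < ε) :
    ∃ G : CoalPair,
      Filter.Tendsto (fun n => dtilde (F n) G) Filter.atTop (nhds 0) ∧
      (tcFinite G → ∀ t ∈ Set.Ioo (tPlus G) (tcReal G), G.p1.f t ≠ G.p2.f t) ∧
      (¬ tcFinite G → ∀ t, tPlus G < t → G.p1.f t ≠ G.p2.f t) ∧
      (tcFinite G → ∀ t, tcReal G ≤ t → G.p1.f t = G.p2.f t) := by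
  classical
  obtain ⟨μ, hμmono, hP1, hr1, hr2⟩ := exists_good_subseq F hC
  obtain ⟨A, hAu, hAt0, hApt, hAdp⟩ := path_limit (show (0:ℝ) < 6 by norm_num) hr1
  obtain ⟨B, hBu, hBt0, hBpt, hBdp⟩ := path_limit (show (0:ℝ) < 6 by norm_num) hr2
  have hd : ∀ k l : ℕ, k ≤ l → Delta (stdPod (F (μ k))) (stdPod (F (μ l))) ≤ (2:ℝ)⁻¹^k := by
    intro k l hkl
    exact le_trans (Delta_le_dtilde _ _)
      (le_of_lt (hP1 k (μ k) le_rfl (μ l) (hμmono.monotone hkl)))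
  set c : LimCtx := ⟨fun k => F (μ k), A, B, hd, hAu, hBu, hAt0, hBt0⟩ with hcdef
  obtain ⟨cstar, hcaL, hcs1, hconv⟩ := c.ttc_tendsto
  have haL0 : 0 ≤ c.aL := c.aL_nonneg
  have hpos : ∀ t : ℝ, c.aL < Real.tanh t → Real.tanh t < cstar → 0 < c.podL t :=
    fun t h1 h2 => c.lpB (r := fun j => j) tendsto_id hconv h1 h2
  have hzerobig : cstar < 1 → ∀ t : ℝ, cstar < Real.tanh t → c.podL t = 0 :=
    fun h1 t h2 => c.lpA (r := fun j => j) tendsto_id hconv h1 h2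
  -- sequences decreasing to a point
  have hseqlim : ∀ t : ℝ, Filter.Tendsto (fun n : ℕ => t + 1/((n:ℝ)+1))
      Filter.atTop (nhds t) := by
    intro t
    have h := tendsto_one_div_add_atTop_nhds_zero_nat (𝕜 := ℝ)
    have h2 : Filter.Tendsto (fun n : ℕ => t + 1/((n:ℝ)+1)) Filter.atTop (nhds (t + 0)) :=
      Filter.Tendsto.add tendsto_const_nhds h
    simpa using h2
  -- ordering of the limit paths
  have hord0 : ∀ t, max A.t0 B.t0 < t → A.f t ≤ B.f t := by
    intro t ht
    have htP0 : 0 ≤ max A.t0 B.t0 := le_max_of_le_left A.ht0.1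
    have ht0 : 0 ≤ t := le_of_lt (lt_of_le_of_lt htP0 ht)
    have hev : ∀ᶠ k in Filter.atTop, tPlus (F (μ k)) < t :=
      c.tPlus_tendsto.eventually (eventually_lt_nhds ht)
    apply le_of_tendsto_of_tendsto (hApt t ht0) (hBpt t ht0)
    filter_upwards [hev] with k hk
    exact (F (μ k)).ordered t hk.le
  have hord : ∀ t, max A.t0 B.t0 ≤ t → A.f t ≤ B.f t := by
    intro t ht
    rcases eq_or_lt_of_le ht with heq | hlt
    · have h1 : Filter.Tendsto (fun n : ℕ => A.f (t + 1/((n:ℝ)+1))) Filter.atTop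
          (nhds (A.f t)) := (A.hf.continuousAt.tendsto).comp (hseqlim t)
      have h2 : Filter.Tendsto (fun n : ℕ => B.f (t + 1/((n:ℝ)+1))) Filter.atTop
          (nhds (B.f t)) := (B.hf.continuousAt.tendsto).comp (hseqlim t)
      apply le_of_tendsto_of_tendsto' h1 h2
      intro n
      apply hord0
      have : (0:ℝ) < 1/((n:ℝ)+1) := by positivity
      rw [← heq]
      linarith
    · exact hord0 t hlt
  -- relations between real time and tanh time at the starting level
  have htanh_tP : Real.tanh (max A.t0 B.t0) = c.aL := rfl
  -- construct the coalescing limit pair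
  have hGex : ∃ G : CoalPair, G.p1 = A ∧ G.p2 = B ∧ ttc G = cstar := by
    by_cases hcs : cstar < 1
    · -- finite coalescence time for the limit
      set tc0 := artanh cstar with htc0def
      have htanhtc : Real.tanh tc0 = cstar := tanh_artanh (by linarith) hcs
      have htPtc : max A.t0 B.t0 ≤ tc0 := by
        have := hcaL
        rw [← htanhtc, ← htanh_tP] at this
        exact tanh_strictMono.le_iff_le.1 this
      have hzero : ∀ t, tc0 ≤ t → c.podL t = 0 := by
        intro t ht
        rcases eq_or_lt_of_le ht with heq | hlt
        · have h1 : Filter.Tendsto (fun n : ℕ => c.podL (t + 1/((n:ℝ)+1))) Filter.atTop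
              (nhds (c.podL t)) := (c.podL_continuous.continuousAt.tendsto).comp (hseqlim t)
          have h2 : ∀ n : ℕ, c.podL (t + 1/((n:ℝ)+1)) = 0 := by
            intro n
            apply hzerobig hcs
            rw [← htanhtc]
            apply tanh_strictMono
            have : (0:ℝ) < 1/((n:ℝ)+1) := by positivity
            rw [← heq]
            linarith
          have h3 : Filter.Tendsto (fun n : ℕ => c.podL (t + 1/((n:ℝ)+1))) Filter.atTop
              (nhds 0) := by
            have heq2 : (fun n : ℕ => c.podL (t + 1/((n:ℝ)+1))) = fun _ => (0:ℝ) :=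
              funext h2
            rw [heq2]
            exact tendsto_const_nhds
          exact tendsto_nhds_unique h1 h3
        · apply hzerobig hcs
          rw [← htanhtc]
          exact tanh_strictMono hlt
      have hSup : ∀ t, tc0 < t → t ∈ coalSet A B := by
        intro t htt
        constructor
        · exact lt_of_le_of_lt htPtc htt
        · have := hzero t htt.le
          unfold LimCtx.podL at this
          linarith [this]
      have hSlow : ∀ t ∈ coalSet A B, tc0 ≤ t := by
        rintro t ⟨ht1, ht2⟩
        by_contra hcon
        push_neg at hcon
        have h1 : Real.tanh t < cstar := by rw [← htanhtc]; exact tanh_strictMono hcon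
        have h2 : c.aL < Real.tanh t := by
          rw [← htanh_tP]
          exact tanh_strictMono ht1
        have h3 := hpos t h2 h1
        have h4 : c.podL t = 0 := by
          unfold LimCtx.podL
          rw [ht2]
          ring
        linarith
      have hne : (coalSet A B).Nonempty := ⟨tc0 + 1, hSup _ (by linarith)⟩
      have hbdd : BddBelow (coalSet A B) := ⟨tc0, fun t ht => hSlow t ht⟩
      have hsinf : sInf (coalSet A B) = tc0 := by
        apply le_antisymm
        · have h1 : sInf (coalSet A B) ≤ sInf (Set.Ioi tc0) :=
            csInf_le_csInf hbdd (Set.nonempty_Ioi) (fun t ht => hSup t ht)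
          rwa [csInf_Ioi] at h1
        · exact le_csInf hne hSlow
      have hco : Coalesces A B := by
        refine Or.inr (fun t ht => ?_)
        rw [hsinf] at ht
        have := hzero t ht
        unfold LimCtx.podL at this
        linarith
      refine ⟨⟨A, B, hord, hco⟩, rfl, rfl, ?_⟩
      have hfin : tcFinite (⟨A, B, hord, hco⟩ : CoalPair) := hne
      unfold ttc
      rw [if_pos hfin]
      show Real.tanh (sInf (coalSet A B)) = cstar
      rw [hsinf, htanhtc]
    · -- no coalescence for the limit
      have hcs1' : cstar = 1 := le_antisymm hcs1 (not_lt.1 hcs)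
      have hempty : coalSet A B = ∅ := by
        rw [Set.eq_empty_iff_forall_notMem]
        rintro t ⟨ht1, ht2⟩
        have h2 : c.aL < Real.tanh t := by
          rw [← htanh_tP]
          exact tanh_strictMono ht1
        have h3 := hpos t h2 (by rw [hcs1']; exact tanh_lt_one t)
        have h4 : c.podL t = 0 := by
          unfold LimCtx.podL
          rw [ht2]
          ring
        linarith
      have hnfin : ¬ tcFinite (⟨A, B, hord, Or.inl hempty⟩ : CoalPair) := by
        intro hcc
        have h9 : (coalSet A B).Nonempty := hcc
        rw [hempty] at h9
        exact Set.not_nonempty_empty h9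
      refine ⟨⟨A, B, hord, Or.inl hempty⟩, rfl, rfl, ?_⟩
      unfold ttc
      rw [if_neg hnfin, hcs1']
  obtain ⟨G, hGA, hGB, hGc⟩ := hGex
  have hGa : ttPlus G = c.aL := by
    unfold ttPlus tPlus
    rw [hGA, hGB]
    rfl
  -- convergence of the subsequence in dtilde
  have hdelta := c.delta_conv hGA hGB hGa hGc hconv
  have hdbar : Filter.Tendsto (fun k => dbar (F (μ k)) G) Filter.atTop (nhds 0) := by
    apply squeeze_zero (fun k => dbar_nonneg _ _)
      (g := fun k => max (dprime (F (μ k)).p1 A) (dprime (F (μ k)).p2 B))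
    · intro k
      apply dbar_le_pair
      · left; rw [hGA]
      · right; rw [hGB]
    · have := hAdp.max hBdp
      simpa using this
  have hdt : Filter.Tendsto (fun k => dtilde (F (μ k)) G) Filter.atTop (nhds 0) := by
    have := hdbar.add hdelta
    rw [add_zero] at this
    exact this
  refine ⟨G, ?_, ?_, ?_, ?_⟩
  · -- full-sequence convergence
    rw [Metric.tendsto_atTop]
    intro ε hε
    obtain ⟨k0, hk0⟩ := exists_pow_lt_of_lt_one (half_pos hε) (show (2:ℝ)⁻¹ < 1 by norm_num)
    obtain ⟨K, hK⟩ := (Metric.tendsto_atTop.1 hdt) (ε/2) (half_pos hε)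
    set k1 := max k0 K with hk1def
    refine ⟨μ k1, fun i hi => ?_⟩
    have h1 : dtilde (F i) (F (μ k1)) < (2:ℝ)⁻¹^k1 := hP1 k1 i hi (μ k1) le_rfl
    have h2 : dtilde (F (μ k1)) G < ε/2 := by
      have := hK k1 (le_max_right _ _)
      rw [Real.dist_eq, sub_zero] at this
      exact lt_of_le_of_lt (le_abs_self _) this
    have h3 : (2:ℝ)⁻¹^k1 ≤ (2:ℝ)⁻¹^k0 := pow_half_le (le_max_left _ _)
    have h4 := dtilde_triangle (F i) (F (μ k1)) G
    have h5 : 0 ≤ dtilde (F i) G := by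
      unfold dtilde
      have := dbar_nonneg (F i) G
      have := Delta_nonneg (stdPod (F i)) (stdPod G)
      linarith
    rw [Real.dist_eq, sub_zero, abs_of_nonneg h5]
    calc dtilde (F i) G ≤ dtilde (F i) (F (μ k1)) + dtilde (F (μ k1)) G := h4
      _ < (2:ℝ)⁻¹^k1 + ε/2 := by linarith
      _ ≤ (2:ℝ)⁻¹^k0 + ε/2 := by linarith
      _ < ε/2 + ε/2 := by linarith
      _ = ε := by ring
  · -- separation strictly inside the pod
    intro hfin t ht heq
    have hp := pod_pos_inside hfin ht.1 ht.2
    unfold pod at hp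
    rw [heq] at hp
    simp at hp
  · intro hninf t ht heq
    have hp := pod_pos_empty hninf ht
    unfold pod at hp
    rw [heq] at hp
    simp at hp
  · intro hfin t ht
    have hp := pod_zero_after hfin ht
    unfold pod at hp
    linarith [sub_eq_zero.1 hp]
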